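/- arXiv:1205.5788 — 9 statements merged into one kernel-verified Lean document; each statement's English description precedes it below -/
import Mathlib

section
/- Let Z have a Beta(m,n) distribution with positive integers m > n. Then P(Z < m/(m+n)) < 1/2, i.e., the mean of Z is strictly less than its median. -/
/-- `tt' m n j = C(m+n-1, j) * m^j * n^(m+n-1-j)`. -/
private def tt' (m n j : ℕ) : ℕ := (m+n-1).choose j * m^j * n^(m+n-1-j)

private lemma t_rec (m n j : ℕ) (hj : j < m+n-1) :
    tt' m n (j+1) * ((j+1)*n) = tt' m n j * (((m+n-1)-j)*m) := by
  unfold tt'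
  set N := m + n - 1 with hN
  have h1 : N.choose (j+1) * (j+1) = N.choose j * (N - j) := Nat.choose_succ_right_eq N j
  have h2 : N - (j+1) + 1 = N - j := by omega
  calc (N.choose (j+1) * m^(j+1) * n^(N-(j+1))) * ((j+1)*n)
      = (N.choose (j+1) * (j+1)) * (m^(j+1) * (n^(N-(j+1)) * n)) := by ring
    _ = (N.choose j * (N-j)) * (m^(j+1) * n^(N-j)) := by rw [h1, ← pow_succ, h2]
    _ = (N.choose j * m^j * n^(N-j)) * ((N-j)*m) := by rw [pow_succ]; ring

private lemma sq_ineq (m n s : ℕ) (hs : s ≤ n) (hnm : n ≤ m) :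
    m * m * ((n-s)*(n+s)) ≤ n * n * ((m-s)*(m+s)) := by
  have hsm : s ≤ m := le_trans hs hnm
  zify [hs, hsm]
  have h1 : (n:ℤ)*n ≤ (m:ℤ)*m := by
    have : (n:ℤ) ≤ m := by exact_mod_cast hnm
    nlinarith [Int.natCast_nonneg n]
  have h2 : (n:ℤ)*n*(s*s) ≤ (m:ℤ)*m*(s*s) :=
    mul_le_mul_of_nonneg_right h1 (mul_self_nonneg _)
  nlinarith [h2]

private lemma pairing (m n : ℕ) (hn : 0 < n) (hmn : n < m) :
    ∀ i, i < n → tt' m n (m+i) ≤ tt' m n (m-1-i) := by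
  intro i
  induction i with
  | zero =>
    intro _
    have h1 : m - 1 < m+n-1 := by omega
    have h2 := t_rec m n (m-1) h1
    rw [show m - 1 + 1 = m from by omega, show (m+n-1) - (m-1) = n from by omega] at h2
    rw [show m + 0 = m from rfl, show m - 1 - 0 = m - 1 from rfl]
    rw [mul_comm n m] at h2
    exact le_of_eq (Nat.eq_of_mul_eq_mul_right (Nat.mul_pos (by omega) hn) h2)
  | succ i ih =>
    intro hi
    have IH := ih (by omega)
    have recA := t_rec m n (m+i) (by omega)
    rw [show (m+n-1) - (m+i) = n - (i+1) from by omega,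
        show m + i + 1 = m + (i+1) from by omega] at recA
    -- recA : tt' (m+(i+1)) * ((m+i+1)*n) = tt' (m+i) * ((n-(i+1))*m)
    have recB := t_rec m n (m-2-i) (by omega)
    rw [show m - 2 - i + 1 = m - (i+1) from by omega,
        show (m+n-1) - (m-2-i) = n + (i+1) from by omega] at recB
    -- recB : tt' (m-(i+1)) * ((m-(i+1))*n) = tt' (m-2-i) * ((n+(i+1))*m)
    rw [show m - 1 - (i+1) = m - 2 - i from by omega]
    rw [show m - 1 - i = m - (i+1) from by omega] at IH
    have key : m * m * ((n-(i+1))*(n+(i+1))) ≤ n * n * ((m-(i+1))*(m+(i+1))) :=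
      sq_ineq m n (i+1) (by omega) (le_of_lt hmn)
    have hkpos : 0 < (m+(i+1))*n * ((n+(i+1))*m) :=
      Nat.mul_pos (Nat.mul_pos (by omega) hn) (Nat.mul_pos (by omega) (by omega))
    apply Nat.le_of_mul_le_mul_right _ hkpos
    calc tt' m n (m+(i+1)) * ((m+(i+1))*n * ((n+(i+1))*m))
        = (tt' m n (m+(i+1)) * ((m+(i+1))*n)) * ((n+(i+1))*m) := by ring
      _ = (tt' m n (m+i) * ((n-(i+1))*m)) * ((n+(i+1))*m) := by rw [recA]
      _ = tt' m n (m+i) * (m * m * ((n-(i+1))*(n+(i+1)))) := by ring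
      _ ≤ tt' m n (m-(i+1)) * (n * n * ((m-(i+1))*(m+(i+1)))) := Nat.mul_le_mul IH key
      _ = (tt' m n (m-(i+1)) * ((m-(i+1))*n)) * ((m+(i+1)) * n) := by ring
      _ = (tt' m n (m-2-i) * ((n+(i+1))*m)) * ((m+(i+1)) * n) := by rw [recB]
      _ = tt' m n (m-2-i) * ((m+(i+1))*n * ((n+(i+1))*m)) := by ring

private lemma sum_lt (m n : ℕ) (hn : 0 < n) (hmn : n < m) :
    2 * (∑ j ∈ Finset.Ico m (m+n), tt' m n j) < (m+n)^(m+n-1) := by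
  have htot : (m+n)^(m+n-1) = ∑ j ∈ Finset.range (m+n), tt' m n j := by
    rw [add_pow m n (m+n-1)]
    rw [show m + n - 1 + 1 = m + n from by omega]
    refine Finset.sum_congr rfl fun j _ => ?_
    unfold tt'
    push_cast
    ring
  have hsplit : ∑ j ∈ Finset.range (m+n), tt' m n j
      = (∑ j ∈ Finset.range m, tt' m n j) + ∑ j ∈ Finset.Ico m (m+n), tt' m n j := by
    rw [Finset.range_eq_Ico, ← Finset.sum_Ico_consecutive _ (Nat.zero_le m) (by omega), Finset.range_eq_Ico]
  have h1 : ∑ j ∈ Finset.Ico m (m+n), tt' m n j = ∑ i ∈ Finset.range n, tt' m n (m+i) := by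
    rw [Finset.sum_Ico_eq_sum_range]
    simp [add_comm]
  have h2 : ∑ i ∈ Finset.range n, tt' m n (m+i) ≤ ∑ i ∈ Finset.range n, tt' m n (m-1-i) :=
    Finset.sum_le_sum fun i hi => pairing m n hn hmn i (Finset.mem_range.mp hi)
  have h3 : ∑ i ∈ Finset.range n, tt' m n (m-1-i)
      = ∑ j ∈ (Finset.range n).image (fun i => m-1-i), tt' m n j := by
    rw [Finset.sum_image]
    intro a ha b hb hab
    have ha' : a < n := Finset.mem_range.mp ha
    have hb' : b < n := Finset.mem_range.mp hb
    simp only at hab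
    omega
  have h4 : insert 0 ((Finset.range n).image (fun i => m-1-i)) ⊆ Finset.range m := by
    intro j hj
    rcases Finset.mem_insert.mp hj with h | h
    · subst h; exact Finset.mem_range.mpr (by omega)
    · obtain ⟨i, hi, rfl⟩ := Finset.mem_image.mp h
      have : i < n := Finset.mem_range.mp hi
      exact Finset.mem_range.mpr (by omega)
  have h0 : 0 ∉ (Finset.range n).image (fun i => m-1-i) := by
    intro h
    obtain ⟨i, hi, hie⟩ := Finset.mem_image.mp h
    have : i < n := Finset.mem_range.mp hi
    omega
  have htt0 : 0 < tt' m n 0 := by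
    unfold tt'
    simp only [pow_zero, Nat.choose_zero_right, one_mul, Nat.sub_zero]
    exact Nat.pow_pos hn
  have h5 : ∑ j ∈ (Finset.range n).image (fun i => m-1-i), tt' m n j
      < ∑ j ∈ Finset.range m, tt' m n j := by
    calc ∑ j ∈ (Finset.range n).image (fun i => m-1-i), tt' m n j
        < tt' m n 0 + ∑ j ∈ (Finset.range n).image (fun i => m-1-i), tt' m n j := by omega
      _ = ∑ j ∈ insert 0 ((Finset.range n).image (fun i => m-1-i)), tt' m n j :=
          (Finset.sum_insert h0).symm
      _ ≤ ∑ j ∈ Finset.range m, tt' m n j := Finset.sum_le_sum_of_subset h4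
  omega

/-- partial binomial sum `S(x) = Σ_{j=m}^{m+n-1} C(N,j) x^j (1-x)^(N-j)`, `N = m+n-1`. -/
private noncomputable def Spoly (m n : ℕ) (x : ℝ) : ℝ :=
  ∑ j ∈ Finset.Ico m (m+n), ((m+n-1).choose j : ℝ) * x^j * (1-x)^(m+n-1-j)

private noncomputable def upol (m n j : ℕ) (x : ℝ) : ℝ :=
  ((j * (m+n-1).choose j : ℕ) : ℝ) * x^(j-1) * (1-x)^(m+n-1-j)

private lemma hasDeriv_term (m n j : ℕ) (x : ℝ) :
    HasDerivAt (fun y : ℝ => ((m+n-1).choose j : ℝ) * y^j * (1-y)^(m+n-1-j))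
      (upol m n j x - upol m n (j+1) x) x := by
  set N := m + n - 1 with hN
  have h1 : HasDerivAt (fun y : ℝ => y^j) ((j:ℝ)*x^(j-1)) x := hasDerivAt_pow j x
  have h2 : HasDerivAt (fun y : ℝ => (1-y)^(N-j))
      (((N-j : ℕ):ℝ)*(1-x)^(N-j-1) * (-1)) x := by
    exact (hasDerivAt_pow (N-j) (1-x)).comp x ((hasDerivAt_id x).const_sub 1)
  have h3 := (h1.mul h2).const_mul ((N.choose j : ℝ))
  have h4 : HasDerivAt (fun y : ℝ => (N.choose j : ℝ) * y^j * (1-y)^(N-j))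
      ((N.choose j : ℝ) * ((j:ℝ)*x^(j-1) * (1-x)^(N-j) + x^j * (((N-j:ℕ):ℝ)*(1-x)^(N-j-1) * (-1)))) x := by
    simpa only [Pi.mul_apply, mul_assoc] using h3
  convert h4 using 1
  unfold upol
  rw [show N - (j+1) = N - j - 1 from by omega]
  rw [show j + 1 - 1 = j from rfl]
  have hch : ((j+1) * N.choose (j+1) : ℕ) = (N.choose j * (N - j) : ℕ) := by
    rw [mul_comm]; exact Nat.choose_succ_right_eq N j
  rw [hch]
  push_cast
  ring

private lemma hasDeriv_S (m n : ℕ) (hm : 0 < m) (hn : 0 < n) (x : ℝ) :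
    HasDerivAt (Spoly m n)
      (((m * (m+n-1).choose m : ℕ):ℝ) * (x^(m-1) * (1-x)^(n-1))) x := by
  have h := HasDerivAt.fun_sum (fun j (_ : j ∈ Finset.Ico m (m+n)) => hasDeriv_term m n j x)
  have : HasDerivAt (Spoly m n)
      (∑ j ∈ Finset.Ico m (m+n), (upol m n j x - upol m n (j+1) x)) x := by
    exact h
  convert this using 1
  rw [Finset.sum_Ico_eq_sum_range]
  rw [show m + n - m = n from by omega]
  have : ∀ i, upol m n (m+i+1) x = upol m n (m+(i+1)) x := fun i => by rw [add_assoc]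
  calc ((m * (m+n-1).choose m : ℕ):ℝ) * (x^(m-1) * (1-x)^(n-1))
      = upol m n (m+0) x - upol m n (m+n) x := by
        unfold upol
        rw [add_zero, show (m+n) * (m+n-1).choose (m+n) = 0 from by
          rw [Nat.choose_eq_zero_of_lt (by omega)]; ring]
        rw [show m + n - 1 - m = n - 1 from by omega]
        push_cast
        ring
    _ = ∑ i ∈ Finset.range n, (upol m n (m+i) x - upol m n (m+(i+1)) x) :=
        (Finset.sum_range_sub' (fun i => upol m n (m+i) x) n).symm
    _ = ∑ i ∈ Finset.range n, (upol m n (m+i) x - upol m n (m+i+1) x) := by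
        refine Finset.sum_congr rfl fun i _ => by rw [this i]

private lemma Spoly_zero (m n : ℕ) (hm : 0 < m) : Spoly m n 0 = 0 := by
  unfold Spoly
  refine Finset.sum_eq_zero fun j hj => ?_
  have hj' : m ≤ j := (Finset.mem_Ico.mp hj).1
  rw [zero_pow (by omega)]
  ring

private lemma Spoly_one (m n : ℕ) (hm : 0 < m) (hn : 0 < n) : Spoly m n 1 = 1 := by
  unfold Spoly
  rw [Finset.sum_eq_single_of_mem (m+n-1)
    (Finset.mem_Ico.mpr ⟨by omega, by omega⟩)]
  · rw [Nat.choose_self, Nat.sub_self, pow_zero, one_pow]; norm_num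
  · intro j hj hne
    have hj' : j < m + n := (Finset.mem_Ico.mp hj).2
    rw [show (1:ℝ) - 1 = 0 from by ring, zero_pow (by omega)]
    ring

private lemma ftc (m n : ℕ) (hm : 0 < m) (hn : 0 < n) (a b : ℝ) :
    ((m * (m+n-1).choose m : ℕ):ℝ) * ∫ x in a..b, x^(m-1) * (1-x)^(n-1)
      = Spoly m n b - Spoly m n a := by
  rw [← intervalIntegral.integral_const_mul]
  exact intervalIntegral.integral_eq_sub_of_hasDerivAt
    (fun x _ => hasDeriv_S m n hm hn x)
    (Continuous.intervalIntegrable (by continuity) a b)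


private lemma Spoly_c (m n : ℕ) (hn : 0 < n) (hmn : n < m) :
    Spoly m n ((m:ℝ)/((m:ℝ)+(n:ℝ)))
      = ((∑ j ∈ Finset.Ico m (m+n), tt' m n j : ℕ) : ℝ) / ((m:ℝ)+(n:ℝ))^(m+n-1) := by
  have hd : (0:ℝ) < (m:ℝ)+(n:ℝ) := by positivity
  have h1c : 1 - (m:ℝ)/((m:ℝ)+(n:ℝ)) = (n:ℝ)/((m:ℝ)+(n:ℝ)) := by field_simp; ring
  unfold Spoly
  push_cast [Finset.sum_div]
  refine Finset.sum_congr rfl fun j hj => ?_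
  have hjN : j ≤ m+n-1 := by
    have := (Finset.mem_Ico.mp hj).2; omega
  rw [h1c, div_pow, div_pow]
  unfold tt'
  push_cast
  rw [eq_div_iff (by positivity),
    show ((m:ℝ)+(n:ℝ))^(m+n-1) = ((m:ℝ)+(n:ℝ))^j * ((m:ℝ)+(n:ℝ))^(m+n-1-j) from by
      rw [← pow_add]; congr 1; omega]
  field_simp

section aux

private lemma two_Spoly_lt_one (m n : ℕ) (hn : 0 < n) (hmn : n < m) :
    2 * Spoly m n ((m:ℝ)/((m:ℝ)+(n:ℝ))) < 1 := by
  rw [Spoly_c m n hn hmn, ← mul_div_assoc, div_lt_one (by positivity)]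
  have h := sum_lt m n hn hmn
  calc (2:ℝ) * ((∑ j ∈ Finset.Ico m (m+n), tt' m n j : ℕ) : ℝ)
      = ((2 * ∑ j ∈ Finset.Ico m (m+n), tt' m n j : ℕ) : ℝ) := by push_cast; ring
    _ < (((m+n)^(m+n-1) : ℕ) : ℝ) := by exact_mod_cast h
    _ = ((m:ℝ)+(n:ℝ))^(m+n-1) := by push_cast; ring

end aux

open MeasureTheory ProbabilityTheory

/-- The Beta(m,n) density `z^(m-1) (1-z)^(n-1) / B(m,n)` on (0,1), where
`B(m,n) = Γ(m)Γ(n)/Γ(m+n)`. -/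
noncomputable def betaPDFReal (m n : ℕ) (z : ℝ) : ℝ :=
  if z ∈ Set.Ioo (0 : ℝ) 1 then
    z ^ (m - 1) * (1 - z) ^ (n - 1) /
      (Real.Gamma m * Real.Gamma n / Real.Gamma (m + n))
  else 0

/-- If Z has a Beta(m,n) distribution with positive integers m > n, then
P(Z < m/(m+n)) < 1/2, i.e. the mean of Z is strictly below its median. -/
theorem beta_mean_lt_median
    {Ω : Type*} [MeasurableSpace Ω] (P : Measure Ω) [IsProbabilityMeasure P]
    (m n : ℕ) (hn : 0 < n) (hmn : m > n)
    (Z : Ω → ℝ) (hZ : Measurable Z)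
    (hdist : Measure.map Z P
      = volume.withDensity (fun z => ENNReal.ofReal (_root_.betaPDFReal m n z))) :
    P {ω | Z ω < (m : ℝ) / (m + n)} < 1 / 2 := by
  have hm : 0 < m := hn.trans hmn
  set c : ℝ := (m : ℝ) / (m + n) with hc
  have hden : (0:ℝ) < (m:ℝ) + (n:ℝ) := by positivity
  have hc0 : 0 < c := by positivity
  have hc1 : c < 1 := by
    rw [hc, div_lt_one hden]
    have : (0:ℝ) < (n:ℝ) := by exact_mod_cast hn
    linarith
  set B : ℝ := Real.Gamma m * Real.Gamma n / Real.Gamma (m + n) with hB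
  have hBpos : 0 < B := by
    have h1 : (0:ℝ) < (m:ℝ) := by exact_mod_cast hm
    have h2 : (0:ℝ) < (n:ℝ) := by exact_mod_cast hn
    exact div_pos (mul_pos (Real.Gamma_pos_of_pos h1) (Real.Gamma_pos_of_pos h2))
      (Real.Gamma_pos_of_pos (by linarith))
  set G : ℝ → ℝ := fun z => z ^ (m-1) * (1 - z) ^ (n-1) with hG
  have hpdf : ∀ z, ENNReal.ofReal (_root_.betaPDFReal m n z)
      = Set.indicator (Set.Ioo (0:ℝ) 1) (fun z => ENNReal.ofReal (G z / B)) z := by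
    intro z
    unfold _root_.betaPDFReal
    by_cases hz : z ∈ Set.Ioo (0:ℝ) 1
    · rw [if_pos hz, Set.indicator_of_mem hz]
    · rw [if_neg hz, Set.indicator_of_notMem hz, ENNReal.ofReal_zero]
  have key : ∀ s : Set ℝ, MeasurableSet s →
      (volume.withDensity fun z => ENNReal.ofReal (_root_.betaPDFReal m n z)) s
        = ∫⁻ z in Set.Ioo (0:ℝ) 1 ∩ s, ENNReal.ofReal (G z / B) := by
    intro s hs
    rw [withDensity_apply _ hs]
    simp_rw [hpdf]
    rw [lintegral_indicator measurableSet_Ioo _,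
      Measure.restrict_restrict measurableSet_Ioo]
  -- total mass one
  have huniv : (volume.withDensity fun z => ENNReal.ofReal (_root_.betaPDFReal m n z))
      Set.univ = 1 := by
    rw [← hdist, Measure.map_apply hZ MeasurableSet.univ, Set.preimage_univ,
      measure_univ]
  have hone : ∫⁻ z in Set.Ioo (0:ℝ) 1, ENNReal.ofReal (G z / B) = 1 := by
    rw [← Set.inter_univ (Set.Ioo (0:ℝ) 1), ← key _ MeasurableSet.univ]
    exact huniv
  -- the probability in question
  have hP : P {ω | Z ω < c} = ∫⁻ z in Set.Ioo 0 c, ENNReal.ofReal (G z / B) := by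
    have h1 : {ω | Z ω < c} = Z ⁻¹' (Set.Iio c) := rfl
    have h2 : Set.Ioo (0:ℝ) 1 ∩ Set.Iio c = Set.Ioo 0 c := by
      ext z
      simp only [Set.mem_inter_iff, Set.mem_Ioo, Set.mem_Iio]
      constructor
      · rintro ⟨⟨a, _⟩, b⟩; exact ⟨a, b⟩
      · rintro ⟨a, b⟩; exact ⟨⟨a, b.trans hc1⟩, b⟩
    rw [h1, ← Measure.map_apply hZ measurableSet_Iio, hdist,
      key _ measurableSet_Iio, h2]
  -- convert lintegrals to interval integrals
  have hcont : Continuous fun z => G z / B := by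
    apply Continuous.div_const
    rw [hG]; continuity
  have conv : ∀ b : ℝ, 0 < b → b ≤ 1 →
      ∫⁻ z in Set.Ioo 0 b, ENNReal.ofReal (G z / B)
        = ENNReal.ofReal ((∫ z in (0:ℝ)..b, G z) / B) := by
    intro b hb hb1
    have hint : IntegrableOn (fun z => G z / B) (Set.Ioo 0 b) volume :=
      (hcont.integrableOn_Icc).mono_set Set.Ioo_subset_Icc_self
    have hnn : 0 ≤ᵐ[volume.restrict (Set.Ioo 0 b)] fun z => G z / B := by
      filter_upwards [ae_restrict_mem measurableSet_Ioo] with z hz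
      have h1 : (0:ℝ) ≤ z := hz.1.le
      have h2 : (0:ℝ) ≤ 1 - z := by
        have := hz.2; linarith
      exact div_nonneg (mul_nonneg (pow_nonneg h1 _) (pow_nonneg h2 _)) hBpos.le
    rw [← ofReal_integral_eq_lintegral_ofReal hint hnn]
    congr 1
    rw [integral_div]
    congr 1
    rw [intervalIntegral.integral_of_le hb.le, integral_Ioc_eq_integral_Ioo]
  -- interval integrals via FTC
  set K : ℝ := ((m * (m+n-1).choose m : ℕ) : ℝ) with hK
  have hKpos : (0:ℝ) < K := by
    rw [hK]
    exact_mod_cast Nat.mul_pos hm (Nat.choose_pos (by omega))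
  have hIc : K * ∫ z in (0:ℝ)..c, G z = Spoly m n c := by
    rw [hG, ftc m n hm hn, Spoly_zero m n hm, sub_zero]
  have hI1 : K * ∫ z in (0:ℝ)..1, G z = 1 := by
    rw [hG, ftc m n hm hn, Spoly_zero m n hm, Spoly_one m n hm hn, sub_zero]
  -- normalization: B equals the full integral
  have hBI : (∫ z in (0:ℝ)..1, G z) = B := by
    have h := hone
    rw [conv 1 one_pos le_rfl] at h
    have h' : (∫ z in (0:ℝ)..1, G z) / B = 1 := ENNReal.ofReal_eq_one.mp h
    field_simp at h'
    linarith [h']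
  have hI1pos : (0:ℝ) < ∫ z in (0:ℝ)..1, G z := by rw [hBI]; exact hBpos
  have hIcEq : (∫ z in (0:ℝ)..c, G z) = Spoly m n c * ∫ z in (0:ℝ)..1, G z := by
    apply mul_left_cancel₀ (ne_of_gt hKpos)
    rw [hIc, show K * (Spoly m n c * ∫ z in (0:ℝ)..1, G z)
        = Spoly m n c * (K * ∫ z in (0:ℝ)..1, G z) from by ring, hI1, mul_one]
  have hSc : (∫ z in (0:ℝ)..c, G z) / B = Spoly m n c := by
    rw [← hBI, hIcEq, mul_div_assoc, div_self (ne_of_gt hI1pos), mul_one]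
  -- conclude
  have hhalf : Spoly m n c < 1/2 := by
    have := two_Spoly_lt_one m n hn hmn
    linarith
  rw [hP, conv c hc0 hc1.le, hSc]
  have h2 : (1/2 : ENNReal) = ENNReal.ofReal (1/2) := by
    rw [ENNReal.ofReal_div_of_pos (by norm_num), ENNReal.ofReal_one,
      ENNReal.ofReal_ofNat]
  rw [h2]
  exact (ENNReal.ofReal_lt_ofReal_iff (by norm_num)).mpr hhalf
end

section
/- For positive integers m and n, the regularized incomplete beta function I(m/(m+n), m, n) is strictly decreasing in m for fixed n. -/
set_option maxHeartbeats 1000000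

open MeasureTheory

/-- The regularized incomplete beta function
`I(x, α, β) = (1/B(α,β)) ∫₀^x t^(α-1) (1-t)^(β-1) dt`,
where `B(α,β) = Γ(α)Γ(β)/Γ(α+β)`. -/
noncomputable def regIncBeta (x α β : ℝ) : ℝ :=
  (∫ t in (0:ℝ)..x, t ^ (α - 1) * (1 - t) ^ (β - 1)) /
    (Real.Gamma α * Real.Gamma β / Real.Gamma (α + β))

namespace RegIncBetaAux

open intervalIntegral Set

noncomputable def Jf (a b : ℕ) : ℝ := ∫ v in (0:ℝ)..((a:ℝ)+1), v^a / (v+((b:ℝ)+1))^(a+b+2)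

lemma subst_lemma (a b : ℕ) :
    (∫ t in (0:ℝ)..((a+1)/((a+1)+(b+1))), t^a * (1-t)^b)
      = ((b:ℝ)+1)^(b+1) * ∫ v in (0:ℝ)..(a+1), v^a / (v+(b+1))^(a+b+2) := by
  have hc : (0:ℝ) < (b:ℝ)+1 := by positivity
  have key : (∫ v in (0:ℝ)..((a:ℝ)+1),
      (((b:ℝ)+1)/(v+((b:ℝ)+1))^2) • ((fun t : ℝ => t^a * (1-t)^b) ∘ (fun v => v/(v+((b:ℝ)+1)))) v)
      = ∫ t in ((0:ℝ)/((0:ℝ)+((b:ℝ)+1)))..(((a:ℝ)+1)/(((a:ℝ)+1)+((b:ℝ)+1))), t^a * (1-t)^b := by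
    apply integral_comp_smul_deriv (f := fun v => v/(v+((b:ℝ)+1)))
    · intro x hx
      rw [uIcc_of_le (by positivity)] at hx
      have hx0 : (0:ℝ) ≤ x := hx.1
      have hne : x + ((b:ℝ)+1) ≠ 0 := by positivity
      have := (hasDerivAt_id x).div ((hasDerivAt_id x).add_const ((b:ℝ)+1)) hne
      refine this.congr_deriv ?_
      simp only [id]
      ring
    · apply ContinuousOn.div continuousOn_const
      · fun_prop
      · intro x hx
        rw [uIcc_of_le (by positivity)] at hx
        have hx0 : (0:ℝ) ≤ x := hx.1
        positivity
    · fun_prop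
  rw [zero_div] at key
  rw [← key, ← intervalIntegral.integral_const_mul]
  apply intervalIntegral.integral_congr
  intro v hv
  rw [uIcc_of_le (by positivity)] at hv
  have hv0 : (0:ℝ) ≤ v := hv.1
  have hne : (0:ℝ) < v + ((b:ℝ)+1) := by positivity
  simp only [Function.comp, smul_eq_mul]
  have h1 : (1 : ℝ) - v/(v+((b:ℝ)+1)) = ((b:ℝ)+1)/(v+((b:ℝ)+1)) := by field_simp; ring
  rw [h1, div_pow, div_pow]
  field_simp
  ring

lemma ftc_lemma (a b : ℕ) :
    (∫ v in (0:ℝ)..((a:ℝ)+1),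
      (((a:ℝ)+1) * v^a / (v+((b:ℝ)+1))^(a+b+2) - ((a:ℝ)+(b:ℝ)+2) * v^(a+1) / (v+((b:ℝ)+1))^(a+b+3)))
      = ((a:ℝ)+1)^(a+1)/((a:ℝ)+(b:ℝ)+2)^(a+b+2) := by
  have hder : ∀ x ∈ uIcc (0:ℝ) ((a:ℝ)+1),
      HasDerivAt (fun v : ℝ => v^(a+1) / (v+((b:ℝ)+1))^(a+b+2))
        (((a:ℝ)+1) * x^a / (x+((b:ℝ)+1))^(a+b+2) - ((a:ℝ)+(b:ℝ)+2) * x^(a+1) / (x+((b:ℝ)+1))^(a+b+3)) x := by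
    intro x hx
    rw [uIcc_of_le (by positivity)] at hx
    have hx0 : (0:ℝ) ≤ x := hx.1
    have hne : x + ((b:ℝ)+1) ≠ 0 := by positivity
    have h1 : HasDerivAt (fun v : ℝ => v^(a+1)) (((a:ℕ)+1 : ℕ) * x^a) x := by
      simpa using hasDerivAt_pow (a+1) x
    have h2 : HasDerivAt (fun v : ℝ => (v+((b:ℝ)+1))^(a+b+2))
        (((a+b+2 : ℕ):ℝ) * (x+((b:ℝ)+1))^(a+b+1)) x := by
      have := ((hasDerivAt_id x).add_const ((b:ℝ)+1)).pow (a+b+2)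
      simp at this ⊢; exact this
    have := h1.div h2 (pow_ne_zero _ hne)
    refine this.congr_deriv ?_
    have hne' : (x + ((b:ℝ)+1))^(a+b+3) ≠ 0 := pow_ne_zero _ hne
    push_cast
    field_simp
    ring
  have hint : IntervalIntegrable (fun x : ℝ =>
      ((a:ℝ)+1) * x^a / (x+((b:ℝ)+1))^(a+b+2) - ((a:ℝ)+(b:ℝ)+2) * x^(a+1) / (x+((b:ℝ)+1))^(a+b+3))
      volume 0 ((a:ℝ)+1) := by
    apply ContinuousOn.intervalIntegrable
    apply ContinuousOn.sub <;>
    · apply ContinuousOn.div (by fun_prop) (by fun_prop)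
      intro x hx
      rw [uIcc_of_le (by positivity)] at hx
      have hx0 : (0:ℝ) ≤ x := hx.1
      positivity
  rw [intervalIntegral.integral_eq_sub_of_hasDerivAt hder hint]
  norm_num
  ring

lemma tail_lemma (a b : ℕ) :
    (∫ v in ((a:ℝ)+1)..((a:ℝ)+2), v^(a+1) / (v+((b:ℝ)+1))^(a+b+3))
      < ((a:ℝ)+1)^(a+1)/((a:ℝ)+(b:ℝ)+2)^(a+b+3) := by
  set c : ℝ := (b:ℝ)+1 with hc
  have hcpos : (0:ℝ) < c := by positivity
  set ψ : ℝ → ℝ := fun v => v^(a+1) / (v+c)^(a+b+3) with hψ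
  have hψc : ∀ x : ℝ, 0 ≤ x → ContinuousWithinAt ψ (Icc ((a:ℝ)+1) ((a:ℝ)+2)) x := by
    intro x hx
    apply ContinuousWithinAt.div
    · exact (continuous_pow _).continuousWithinAt
    · exact ((continuous_id.add continuous_const).pow _).continuousWithinAt
    · positivity
  have hcont : ContinuousOn ψ (Icc ((a:ℝ)+1) ((a:ℝ)+2)) := by
    intro x hx
    exact hψc x (le_trans (by positivity) hx.1)
  have hanti : StrictAntiOn ψ (Icc ((a:ℝ)+1) ((a:ℝ)+2)) := by
    apply strictAntiOn_of_deriv_neg (convex_Icc _ _) hcont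
    intro x hx
    rw [interior_Icc] at hx
    have hx1 : (a:ℝ)+1 < x := hx.1
    have hx0 : (0:ℝ) < x := lt_of_le_of_lt (by positivity) hx1
    have hne : x + c ≠ 0 := by positivity
    have h1 : HasDerivAt (fun v : ℝ => v^(a+1)) (((a:ℕ)+1 : ℕ) * x^a) x := by
      simpa using hasDerivAt_pow (a+1) x
    have h2 : HasDerivAt (fun v : ℝ => (v+c)^(a+b+3))
        (((a+b+3 : ℕ):ℝ) * (x+c)^(a+b+2)) x := by
      have := ((hasDerivAt_id x).add_const c).pow (a+b+3)
      simp at this ⊢; exact this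
    have hD := h1.div h2 (pow_ne_zero _ hne)
    rw [show deriv ψ x = _ from hD.deriv]
    apply div_neg_of_neg_of_pos
    · have hfac : ((a:ℕ)+1 : ℕ) * x^a * (x+c)^(a+b+3) - x^(a+1) * (((a+b+3 : ℕ):ℝ) * (x+c)^(a+b+2))
          = x^a * (x+c)^(a+b+2) * (((a:ℝ)+1)*c - ((b:ℝ)+2)*x) := by
        push_cast
        ring
      rw [hfac]
      apply mul_neg_of_pos_of_neg
      · positivity
      · rw [hc]; nlinarith [hx.1]
    · positivity
  have hend : ψ ((a:ℝ)+1) = ((a:ℝ)+1)^(a+1)/((a:ℝ)+(b:ℝ)+2)^(a+b+3) := by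
    rw [hψ]; show ((a:ℝ)+1)^(a+1)/((a:ℝ)+1+c)^(a+b+3) = _; rw [hc]; ring
  calc (∫ v in ((a:ℝ)+1)..((a:ℝ)+2), ψ v)
      < ∫ _ in ((a:ℝ)+1)..((a:ℝ)+2), ψ ((a:ℝ)+1) := by
        apply intervalIntegral.integral_lt_integral_of_continuousOn_of_le_of_exists_lt
          (by linarith) hcont continuousOn_const
        · intro x hx
          exact le_of_lt (hanti (left_mem_Icc.2 (by linarith)) ⟨le_of_lt hx.1, hx.2⟩ hx.1)
        · refine ⟨(a:ℝ)+2, right_mem_Icc.2 (by linarith), ?_⟩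
          exact hanti (left_mem_Icc.2 (by linarith)) (right_mem_Icc.2 (by linarith)) (by linarith)
    _ = ((a:ℝ)+1)^(a+1)/((a:ℝ)+(b:ℝ)+2)^(a+b+3) := by
        rw [intervalIntegral.integral_const, hend]
        norm_num

lemma key_full (a b : ℕ) : ((a:ℝ)+(b:ℝ)+2) * Jf (a+1) b < ((a:ℝ)+1) * Jf a b := by
  have ftc := ftc_lemma a b
  have tail := tail_lemma a b
  have hc : (0:ℝ) < (b:ℝ)+1 := by positivity
  have hint1 : ∀ (x y : ℝ), 0 ≤ x → 0 ≤ y → IntervalIntegrable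
      (fun v : ℝ => v^(a+1) / (v+((b:ℝ)+1))^(a+b+3)) volume x y := by
    intro x y hx hy
    apply ContinuousOn.intervalIntegrable
    apply ContinuousOn.div (by fun_prop) (by fun_prop)
    intro z hz
    have hz0 : (0:ℝ) ≤ z := by
      rcases le_total x y with h | h
      · rw [uIcc_of_le h] at hz; exact le_trans hx hz.1
      · rw [uIcc_of_ge h] at hz; exact le_trans hy hz.1
    positivity
  have hint3 : ∀ (C : ℝ) (p q : ℕ) (x y : ℝ), 0 ≤ x → 0 ≤ y →
      IntervalIntegrable (fun v : ℝ => C * v^p / (v+((b:ℝ)+1))^q) volume x y := by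
    intro C p q x y hx hy
    apply ContinuousOn.intervalIntegrable
    apply ContinuousOn.div (by fun_prop) (by fun_prop)
    intro z hz
    have hz0 : (0:ℝ) ≤ z := by
      rcases le_total x y with h | h
      · rw [uIcc_of_le h] at hz; exact le_trans hx hz.1
      · rw [uIcc_of_ge h] at hz; exact le_trans hy hz.1
    positivity
  have hsplit : Jf (a+1) b
      = (∫ v in (0:ℝ)..((a:ℝ)+1), v^(a+1) / (v+((b:ℝ)+1))^(a+b+3))
        + ∫ v in ((a:ℝ)+1)..((a:ℝ)+2), v^(a+1) / (v+((b:ℝ)+1))^(a+b+3) := by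
    rw [Jf]
    push_cast
    rw [show ((a:ℝ)+1)+1 = (a:ℝ)+2 by ring, show (a+1)+b+2 = a+b+3 from by ring]
    exact (intervalIntegral.integral_add_adjacent_intervals
      (hint1 0 ((a:ℝ)+1) le_rfl (by positivity))
      (hint1 ((a:ℝ)+1) ((a:ℝ)+2) (by positivity) (by positivity))).symm
  have hJa : ((a:ℝ)+1) * Jf a b
      = ((a:ℝ)+1)^(a+1)/((a:ℝ)+(b:ℝ)+2)^(a+b+2)
        + ((a:ℝ)+(b:ℝ)+2) * ∫ v in (0:ℝ)..((a:ℝ)+1), v^(a+1) / (v+((b:ℝ)+1))^(a+b+3) := by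
    have e1 : (∫ v in (0:ℝ)..((a:ℝ)+1), ((a:ℝ)+1) * (v^a / (v+((b:ℝ)+1))^(a+b+2)))
        = ∫ v in (0:ℝ)..((a:ℝ)+1),
          ((((a:ℝ)+1) * v^a / (v+((b:ℝ)+1))^(a+b+2)
              - ((a:ℝ)+(b:ℝ)+2) * v^(a+1) / (v+((b:ℝ)+1))^(a+b+3))
            + ((a:ℝ)+(b:ℝ)+2) * (v^(a+1) / (v+((b:ℝ)+1))^(a+b+3))) := by
      apply intervalIntegral.integral_congr
      intro v _
      ring
    have e2 : (∫ v in (0:ℝ)..((a:ℝ)+1),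
          ((((a:ℝ)+1) * v^a / (v+((b:ℝ)+1))^(a+b+2)
              - ((a:ℝ)+(b:ℝ)+2) * v^(a+1) / (v+((b:ℝ)+1))^(a+b+3))
            + ((a:ℝ)+(b:ℝ)+2) * (v^(a+1) / (v+((b:ℝ)+1))^(a+b+3))))
        = (∫ v in (0:ℝ)..((a:ℝ)+1),
            (((a:ℝ)+1) * v^a / (v+((b:ℝ)+1))^(a+b+2)
              - ((a:ℝ)+(b:ℝ)+2) * v^(a+1) / (v+((b:ℝ)+1))^(a+b+3)))
          + ∫ v in (0:ℝ)..((a:ℝ)+1), ((a:ℝ)+(b:ℝ)+2) * (v^(a+1) / (v+((b:ℝ)+1))^(a+b+3)) := by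
      apply intervalIntegral.integral_add
      · exact (hint3 ((a:ℝ)+1) a (a+b+2) 0 ((a:ℝ)+1) le_rfl (by positivity)).sub
          (hint3 ((a:ℝ)+(b:ℝ)+2) (a+1) (a+b+3) 0 ((a:ℝ)+1) le_rfl (by positivity))
      · exact (hint1 0 ((a:ℝ)+1) le_rfl (by positivity)).const_mul _
    rw [Jf, ← intervalIntegral.integral_const_mul, e1, e2, ftc,
        intervalIntegral.integral_const_mul]
  rw [hsplit, hJa, mul_add]
  have := mul_lt_mul_of_pos_left tail (show (0:ℝ) < (a:ℝ)+(b:ℝ)+2 by positivity)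
  have heq : ((a:ℝ)+(b:ℝ)+2) * (((a:ℝ)+1)^(a+1)/((a:ℝ)+(b:ℝ)+2)^(a+b+3))
      = ((a:ℝ)+1)^(a+1)/((a:ℝ)+(b:ℝ)+2)^(a+b+2) := by
    rw [show a+b+3 = (a+b+2)+1 from rfl, pow_succ]
    field_simp
    ring
  linarith [this, heq ▸ this]

lemma rpow_integrand (k b : ℕ) (x : ℝ) :
    (∫ t in (0:ℝ)..x, t ^ (((k:ℝ)+1) - 1) * (1-t) ^ (((b:ℝ)+1) - 1))
      = ∫ t in (0:ℝ)..x, t^k * (1-t)^b := by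
  apply intervalIntegral.integral_congr
  intro t _
  simp only [show ((k:ℝ)+1)-1 = ((k:ℕ):ℝ) by ring, show ((b:ℝ)+1)-1 = ((b:ℕ):ℝ) by ring,
    Real.rpow_natCast]

lemma repr_lemma (a b : ℕ) :
    regIncBeta (((a:ℝ)+1) / (((a:ℝ)+1)+((b:ℝ)+1))) ((a:ℝ)+1) ((b:ℝ)+1)
      = ((b:ℝ)+1)^(b+1) * Jf a b
        / (Real.Gamma ((a:ℝ)+1) * Real.Gamma ((b:ℝ)+1) / Real.Gamma (((a:ℝ)+1)+((b:ℝ)+1))) := by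
  rw [regIncBeta, rpow_integrand a b, subst_lemma a b, Jf]

lemma step_lemma (a b : ℕ) :
    regIncBeta ((((a:ℝ)+1)+1) / ((((a:ℝ)+1)+1)+((b:ℝ)+1))) (((a:ℝ)+1)+1) ((b:ℝ)+1)
      < regIncBeta (((a:ℝ)+1) / (((a:ℝ)+1)+((b:ℝ)+1))) ((a:ℝ)+1) ((b:ℝ)+1) := by
  have h1 := repr_lemma a b
  have h2 := repr_lemma (a+1) b
  push_cast at h2
  rw [h1, h2]
  have key := key_full a b
  have hg1 : 0 < Real.Gamma ((a:ℝ)+1) := Real.Gamma_pos_of_pos (by positivity)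
  have hgn : 0 < Real.Gamma ((b:ℝ)+1) := Real.Gamma_pos_of_pos (by positivity)
  have hG1 : 0 < Real.Gamma (((a:ℝ)+1)+((b:ℝ)+1)) := Real.Gamma_pos_of_pos (by positivity)
  have hg2 : Real.Gamma (((a:ℝ)+1)+1) = ((a:ℝ)+1) * Real.Gamma ((a:ℝ)+1) :=
    Real.Gamma_add_one (by positivity)
  have hG2 : Real.Gamma ((((a:ℝ)+1)+1)+((b:ℝ)+1))
      = ((a:ℝ)+(b:ℝ)+2) * Real.Gamma (((a:ℝ)+1)+((b:ℝ)+1)) := by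
    rw [show (((a:ℝ)+1)+1)+((b:ℝ)+1) = ((((a:ℝ)+1)+((b:ℝ)+1))+1) by ring]
    rw [Real.Gamma_add_one (by positivity)]
    ring
  rw [hg2, hG2]
  rw [div_lt_div_iff₀ (by positivity) (by positivity)]
  have hC : (0:ℝ) < ((b:ℝ)+1)^(b+1) := by positivity
  have hmul := mul_lt_mul_of_pos_left key
    (show (0:ℝ) < ((b:ℝ)+1)^(b+1) * Real.Gamma ((a:ℝ)+1) * Real.Gamma ((b:ℝ)+1)
      * Real.Gamma (((a:ℝ)+1)+((b:ℝ)+1)) by positivity)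
  set G := Real.Gamma (((a:ℝ)+1)+((b:ℝ)+1))
  set g1 := Real.Gamma ((a:ℝ)+1)
  set gn := Real.Gamma ((b:ℝ)+1)
  have hGne : G ≠ 0 := ne_of_gt hG1
  have hg1ne : g1 ≠ 0 := ne_of_gt hg1
  have hgnne : gn ≠ 0 := ne_of_gt hgn
  rw [← mul_div_assoc, ← mul_div_assoc, div_lt_div_iff₀ (by positivity) (by positivity)]
  nlinarith [hmul]

end RegIncBetaAux

/-- For positive integers m and n, `I(m/(m+n), m, n)` is strictly decreasing in m
for fixed n. -/
theorem regIncBeta_strict_anti_in_m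
    (n : ℕ) (hn : 0 < n) (m₁ m₂ : ℕ) (hm₁ : 0 < m₁) (h : m₁ < m₂) :
    regIncBeta ((m₂ : ℝ) / (m₂ + n)) m₂ n < regIncBeta ((m₁ : ℝ) / (m₁ + n)) m₁ n := by
  obtain ⟨b, rfl⟩ : ∃ b, n = b+1 := ⟨n-1, (Nat.succ_pred_eq_of_pos hn).symm⟩
  have hstep : ∀ m : ℕ, 0 < m →
      regIncBeta ((↑(m+1) : ℝ) / (↑(m+1) + ↑(b+1))) (↑(m+1)) (↑(b+1))
        < regIncBeta ((m : ℝ) / (↑m + ↑(b+1))) (↑m) (↑(b+1)) := by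
    intro m hm
    obtain ⟨a, rfl⟩ : ∃ a, m = a+1 := ⟨m-1, (Nat.succ_pred_eq_of_pos hm).symm⟩
    push_cast
    exact RegIncBetaAux.step_lemma a b
  induction m₂, h using Nat.le_induction with
  | base => exact hstep m₁ hm₁
  | succ k hk ih => exact lt_trans (hstep k (by omega)) ih
end

section
/- For positive integers m and n, the regularized incomplete beta function I(m/(m+n), m, n) is strictly increasing in n for fixed m. -/
open MeasureTheory

lemma aux_step (j : ℕ) :
    ((j:ℝ)+3)^(j+3) * ((j:ℝ)+1)^(j+2) < ((j:ℝ)+2)^(j+3) * ((j:ℝ)+2)^(j+2) := by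
  have hj : (0:ℝ) ≤ (j:ℝ) := Nat.cast_nonneg j
  set y : ℝ := (j:ℝ)+1 with hy
  have hy1 : (1:ℝ) ≤ y := by rw [hy]; linarith
  have hyp : (0:ℝ) < y := by linarith
  set ε : ℝ := 1/(y*(y+2)) with hε
  have hε0 : (0:ℝ) < ε := by positivity
  have hB := one_add_mul_le_pow (by nlinarith : (-2:ℝ) ≤ ε) (j+2)
  have h1 : (1:ℝ) + ε = (y+1)^2/(y*(y+2)) := by rw [hε]; field_simp; ring
  have h2 : ((1:ℝ)+ε)^(j+2) = ((y+1)^(j+2))^2 / ((y^(j+2))*((y+2)^(j+2))) := by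
    rw [h1, div_pow, ← pow_mul, mul_comm 2 (j+2), pow_mul, mul_pow]
  set p : ℝ := y^(j+2) with hp'
  set q : ℝ := (y+2)^(j+2) with hq'
  set r : ℝ := (y+1)^(j+2) with hr'
  have hp : 0 < p := by positivity
  have hq : 0 < q := by positivity
  have hpq : 0 < p*q := mul_pos hp hq
  have hB' : 1 + (y+1)*ε ≤ r^2/(p*q) := by
    rw [h2] at hB; push_cast at hB
    calc 1 + (y+1)*ε = 1 + ((j:ℝ)+2)*ε := by rw [hy]; ring
    _ ≤ r^2/(p*q) := hB
  have hB2 : (1 + (y+1)*ε)*(p*q) ≤ r^2 := (le_div_iff₀ hpq).mp hB'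
  have h3 : (1 + (y+1)*ε)*(y+1) = (y+2) + ε := by rw [hε]; field_simp; ring
  have g1 : ((j:ℝ)+3)^(j+3) = q*(y+2) := by
    have hc : (j:ℝ)+3 = y+2 := by rw [hy]; ring
    rw [hc, hq', ← pow_succ]
  have g2 : ((j:ℝ)+2)^(j+3) * ((j:ℝ)+2)^(j+2) = r^2*(y+1) := by
    have hc : (j:ℝ)+2 = y+1 := by rw [hy]; ring
    rw [hc, hr', ← pow_mul, ← pow_add, ← pow_succ]
    congr 1
    ring
  rw [g1, g2]
  calc q*(y+2)*p = (y+2)*(p*q) := by ring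
  _ < ((y+2)+ε)*(p*q) := by nlinarith [mul_pos (mul_pos hε0 hp) hq]
  _ = (1 + (y+1)*ε)*(p*q)*(y+1) := by rw [mul_right_comm, h3]
  _ ≤ r^2*(y+1) := mul_le_mul_of_nonneg_right hB2 (by linarith)


lemma aux_anti : StrictAnti (fun j : ℕ => ((j:ℝ)+2)^(j+2)/((j:ℝ)+1)^(j+2)) := by
  apply strictAnti_nat_of_succ_lt
  intro j
  simp only [Nat.cast_add, Nat.cast_one]
  rw [div_lt_div_iff₀ (by positivity) (by positivity)]
  have := aux_step j
  calc ((j:ℝ)+1+2)^(j+1+2) * ((j:ℝ)+1)^(j+2)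
      = ((j:ℝ)+3)^(j+3) * ((j:ℝ)+1)^(j+2) := by ring_nf
  _ < ((j:ℝ)+2)^(j+3) * ((j:ℝ)+2)^(j+2) := this
  _ = ((j:ℝ)+2)^(j+2) * ((j:ℝ)+1+1)^(j+1+2) := by ring_nf

lemma aux5 (a b : ℕ) (hab : a < b) :
    ((a:ℝ)+1)^(a+2)*((b:ℝ)+2)^(b+2) < ((a:ℝ)+2)^(a+2)*((b:ℝ)+1)^(b+2) := by
  have h := aux_anti hab
  simp only at h
  rw [div_lt_div_iff₀ (by positivity) (by positivity)] at h
  linarith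


-- derivative of h equals g * q
lemma deriv_h (M K : ℕ) (t : ℝ) :
    HasDerivAt (fun t : ℝ =>
      (((M:ℝ)+(K:ℝ)+3)/((M:ℝ)+1)) * (t^(M+1)*(1-t)^(K+1))
        - (((M:ℝ)+(K:ℝ)+2)^2/(((M:ℝ)+1)*((K:ℝ)+1))) * (t^(M+1)*(1-t)^(K+2)))
      (t^M*(1-t)^K * (1 + (((M:ℝ)+(K:ℝ)+2)^2*((M:ℝ)+(K:ℝ)+3)/(((M:ℝ)+1)*((K:ℝ)+1)))
        * ((t-((M:ℝ)+1)/((M:ℝ)+(K:ℝ)+3))*(((M:ℝ)+1)/((M:ℝ)+(K:ℝ)+2)-t)))) t := by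
  have ha : (0:ℝ) ≤ (M:ℝ) := Nat.cast_nonneg M
  have hb : (0:ℝ) ≤ (K:ℝ) := Nat.cast_nonneg K
  have d0 : HasDerivAt (fun t : ℝ => (1-t)) (-1) t := by
    simpa using (hasDerivAt_id t).const_sub 1
  have d1 : HasDerivAt (fun t : ℝ => t^(M+1)) ((↑(M+1))*t^M) t := by
    simpa using hasDerivAt_pow (M+1) t
  have d2 : HasDerivAt (fun t : ℝ => (1-t)^(K+1)) (↑(K+1)*(1-t)^K*(-1)) t := by
    have h : HasDerivAt (fun t : ℝ => (1-t)^(K+1)) _ t := d0.pow (K+1)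
    simpa using h
  have d3 : HasDerivAt (fun t : ℝ => (1-t)^(K+2)) (↑(K+2)*(1-t)^(K+1)*(-1)) t := by
    have h : HasDerivAt (fun t : ℝ => (1-t)^(K+2)) _ t := d0.pow (K+2)
    simpa using h
  have d4 : HasDerivAt (fun t : ℝ =>
      (((M:ℝ)+(K:ℝ)+3)/((M:ℝ)+1)) * (t^(M+1)*(1-t)^(K+1))
        - (((M:ℝ)+(K:ℝ)+2)^2/(((M:ℝ)+1)*((K:ℝ)+1))) * (t^(M+1)*(1-t)^(K+2))) _ t := ((d1.mul d2).const_mul (((M:ℝ)+(K:ℝ)+3)/((M:ℝ)+1))).sub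
    ((d1.mul d3).const_mul (((M:ℝ)+(K:ℝ)+2)^2/(((M:ℝ)+1)*((K:ℝ)+1))))
  convert d4 using 1
  push_cast
  have h1 : ∀ s : ℝ, s^(M+1) = s^M*s := fun s => pow_succ s M
  have h2 : ∀ s : ℝ, s^(K+1) = s^K*s := fun s => pow_succ s K
  have h3 : ∀ s : ℝ, s^(K+2) = s^K*s^2 := fun s => by rw [pow_add]
  rw [h1, h2 (1-t), h3 (1-t)]
  field_simp
  ring


lemma core (M K : ℕ) :
    (∫ t in ((M:ℝ)+1)/((M:ℝ)+(K:ℝ)+3)..((M:ℝ)+1)/((M:ℝ)+(K:ℝ)+2), t^M*(1-t)^K)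
      < (((M:ℝ)+1)/((M:ℝ)+(K:ℝ)+3))^(M+1) * (1-((M:ℝ)+1)/((M:ℝ)+(K:ℝ)+3))^(K+1) / ((K:ℝ)+1) := by
  have ha : (0:ℝ) ≤ (M:ℝ) := Nat.cast_nonneg M
  have hb : (0:ℝ) ≤ (K:ℝ) := Nat.cast_nonneg K
  set u : ℝ := ((M:ℝ)+1)/((M:ℝ)+(K:ℝ)+3) with hu
  set v : ℝ := ((M:ℝ)+1)/((M:ℝ)+(K:ℝ)+2) with hv
  have hu0 : 0 < u := by rw [hu]; positivity
  have huv : u ≤ v := by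
    rw [hu, hv]
    apply div_le_div_of_nonneg_left (by linarith) (by linarith) (by linarith)
  have hv1 : v ≤ 1 := by
    rw [hv, div_le_one (by linarith)]; linarith
  -- continuity
  have hcg : Continuous (fun t : ℝ => t^M*(1-t)^K) := by fun_prop
  have hcq : Continuous (fun t : ℝ => t^M*(1-t)^K * (1 + (((M:ℝ)+(K:ℝ)+2)^2*((M:ℝ)+(K:ℝ)+3)/(((M:ℝ)+1)*((K:ℝ)+1)))
        * ((t-u)*(v-t)))) := by fun_prop
  -- FTC
  have hftc : (∫ t in u..v, t^M*(1-t)^K * (1 + (((M:ℝ)+(K:ℝ)+2)^2*((M:ℝ)+(K:ℝ)+3)/(((M:ℝ)+1)*((K:ℝ)+1)))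
        * ((t-u)*(v-t))))
      = ((((M:ℝ)+(K:ℝ)+3)/((M:ℝ)+1)) * (v^(M+1)*(1-v)^(K+1))
        - (((M:ℝ)+(K:ℝ)+2)^2/(((M:ℝ)+1)*((K:ℝ)+1))) * (v^(M+1)*(1-v)^(K+2)))
      - ((((M:ℝ)+(K:ℝ)+3)/((M:ℝ)+1)) * (u^(M+1)*(1-u)^(K+1))
        - (((M:ℝ)+(K:ℝ)+2)^2/(((M:ℝ)+1)*((K:ℝ)+1))) * (u^(M+1)*(1-u)^(K+2))) := by
    exact intervalIntegral.integral_eq_sub_of_hasDerivAt (fun t _ => deriv_h M K t)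
      (hcq.intervalIntegrable u v)
  -- monotone comparison
  have hmono : (∫ t in u..v, t^M*(1-t)^K)
      ≤ (∫ t in u..v, t^M*(1-t)^K * (1 + (((M:ℝ)+(K:ℝ)+2)^2*((M:ℝ)+(K:ℝ)+3)/(((M:ℝ)+1)*((K:ℝ)+1)))
        * ((t-u)*(v-t)))) := by
    apply intervalIntegral.integral_mono_on huv (hcg.intervalIntegrable u v)
      (hcq.intervalIntegrable u v)
    intro t ht
    obtain ⟨h1, h2⟩ := ht
    have hg0 : 0 ≤ t^M*(1-t)^K := by
      apply mul_nonneg (pow_nonneg (by linarith) M) (pow_nonneg (by linarith) K)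
    have hq1 : (1:ℝ) ≤ 1 + (((M:ℝ)+(K:ℝ)+2)^2*((M:ℝ)+(K:ℝ)+3)/(((M:ℝ)+1)*((K:ℝ)+1)))
        * ((t-u)*(v-t)) := by
      have : 0 ≤ (((M:ℝ)+(K:ℝ)+2)^2*((M:ℝ)+(K:ℝ)+3)/(((M:ℝ)+1)*((K:ℝ)+1)))
          * ((t-u)*(v-t)) := by
        apply mul_nonneg (by positivity)
        exact mul_nonneg (by linarith) (by linarith)
      linarith
    nlinarith [mul_le_mul_of_nonneg_left hq1 hg0]
  -- endpoint values
  have h1v : (1:ℝ)-v = ((K:ℝ)+1)/((M:ℝ)+(K:ℝ)+2) := by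
    rw [hv]; field_simp; ring
  have h1u : (1:ℝ)-u = ((K:ℝ)+2)/((M:ℝ)+(K:ℝ)+3) := by
    rw [hu]; field_simp; ring
  set P : ℝ := v^(M+1)*(1-v)^(K+1) with hPdef
  set Q : ℝ := u^(M+1)*(1-u)^(K+1) with hQdef
  have hPval : P = ((M:ℝ)+1)^(M+1)*((K:ℝ)+1)^(K+1)/(((M:ℝ)+(K:ℝ)+2)^(M+1)*((M:ℝ)+(K:ℝ)+2)^(K+1)) := by
    rw [hPdef, h1v, hv, div_pow, div_pow, div_mul_div_comm]
  have hQval : Q = ((M:ℝ)+1)^(M+1)*((K:ℝ)+2)^(K+1)/(((M:ℝ)+(K:ℝ)+3)^(M+1)*((M:ℝ)+(K:ℝ)+3)^(K+1)) := by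
    rw [hQdef, h1u, hu, div_pow, div_pow, div_mul_div_comm]
  have hmain : ((K:ℝ)+1)^(K+2)*((M:ℝ)+(K:ℝ)+3)^(M+K+3) < ((K:ℝ)+2)^(K+2)*((M:ℝ)+(K:ℝ)+2)^(M+K+3) := by
    have h5 := aux5 K (M+K+1) (by omega)
    push_cast at h5
    convert h5 using 2 <;> ring
  have hkey : P * (1/((M:ℝ)+1))
      < Q * (((M:ℝ)+(K:ℝ)+2)*((K:ℝ)+2)/(((M:ℝ)+1)*((K:ℝ)+1)*((M:ℝ)+(K:ℝ)+3))) := by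
    rw [hPval, hQval, div_mul_div_comm, div_mul_div_comm,
      div_lt_div_iff₀ (by positivity) (by positivity)]
    calc ((M:ℝ)+1)^(M+1)*((K:ℝ)+1)^(K+1)*1
          * (((M:ℝ)+(K:ℝ)+3)^(M+1)*((M:ℝ)+(K:ℝ)+3)^(K+1)*(((M:ℝ)+1)*((K:ℝ)+1)*((M:ℝ)+(K:ℝ)+3)))
        = ((M:ℝ)+1)^(M+2) * (((K:ℝ)+1)^(K+2)*((M:ℝ)+(K:ℝ)+3)^(M+K+3)) := by ring
      _ < ((M:ℝ)+1)^(M+2) * (((K:ℝ)+2)^(K+2)*((M:ℝ)+(K:ℝ)+2)^(M+K+3)) := by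
          exact (mul_lt_mul_iff_right₀ (by positivity)).mpr hmain
      _ = ((M:ℝ)+1)^(M+1)*((K:ℝ)+2)^(K+1)*(((M:ℝ)+(K:ℝ)+2)*((K:ℝ)+2))
          * (((M:ℝ)+(K:ℝ)+2)^(M+1)*((M:ℝ)+(K:ℝ)+2)^(K+1)*((M:ℝ)+1)) := by ring
  -- assemble endpoint bound
  have hQ0 : 0 < Q := by
    rw [hQval]; positivity
  have hc1 : (((M:ℝ)+(K:ℝ)+3)/((M:ℝ)+1))
      - (((M:ℝ)+(K:ℝ)+2)^2/(((M:ℝ)+1)*((K:ℝ)+1))) * (((K:ℝ)+1)/((M:ℝ)+(K:ℝ)+2))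
      = 1/((M:ℝ)+1) := by
    field_simp; ring
  have hc2 : 1/((K:ℝ)+1) + ((((M:ℝ)+(K:ℝ)+3)/((M:ℝ)+1))
      - (((M:ℝ)+(K:ℝ)+2)^2/(((M:ℝ)+1)*((K:ℝ)+1))) * (((K:ℝ)+2)/((M:ℝ)+(K:ℝ)+3)))
      = ((M:ℝ)+(K:ℝ)+2)*((K:ℝ)+2)/(((M:ℝ)+1)*((K:ℝ)+1)*((M:ℝ)+(K:ℝ)+3)) := by
    field_simp; ring
  have hend : ((((M:ℝ)+(K:ℝ)+3)/((M:ℝ)+1)) * (v^(M+1)*(1-v)^(K+1))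
        - (((M:ℝ)+(K:ℝ)+2)^2/(((M:ℝ)+1)*((K:ℝ)+1))) * (v^(M+1)*(1-v)^(K+2)))
      - ((((M:ℝ)+(K:ℝ)+3)/((M:ℝ)+1)) * (u^(M+1)*(1-u)^(K+1))
        - (((M:ℝ)+(K:ℝ)+2)^2/(((M:ℝ)+1)*((K:ℝ)+1))) * (u^(M+1)*(1-u)^(K+2)))
      < Q/((K:ℝ)+1) := by
    have e1 : v^(M+1)*(1-v)^(K+2) = P*(1-v) := by rw [hPdef]; ring
    have e2 : u^(M+1)*(1-u)^(K+2) = Q*(1-u) := by rw [hQdef]; ring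
    rw [e1, e2, ← hPdef, ← hQdef, h1v, h1u]
    have expandP : ∀ c1 c2 c3 : ℝ, c1*P - c2*(P*c3) = P*(c1 - c2*c3) := by intros; ring
    have expandQ : ∀ c1 c2 c3 : ℝ, c1*Q - c2*(Q*c3) = Q*(c1 - c2*c3) := by intros; ring
    rw [expandP, expandQ, hc1]
    have hQc : Q * (((M:ℝ)+(K:ℝ)+2)*((K:ℝ)+2)/(((M:ℝ)+1)*((K:ℝ)+1)*((M:ℝ)+(K:ℝ)+3)))
        = Q/((K:ℝ)+1) + Q*((((M:ℝ)+(K:ℝ)+3)/((M:ℝ)+1))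
          - (((M:ℝ)+(K:ℝ)+2)^2/(((M:ℝ)+1)*((K:ℝ)+1))) * (((K:ℝ)+2)/((M:ℝ)+(K:ℝ)+3))) := by
      rw [← hc2]; ring
    rw [hQc] at hkey
    have hP1 : P * (1/((M:ℝ)+1)) = P * (1/((M:ℝ)+1)) := rfl
    linarith [hkey]
  calc (∫ t in u..v, t^M*(1-t)^K) ≤ _ := hmono
    _ < Q/((K:ℝ)+1) := by rw [hftc]; exact hend



lemma rep (M K : ℕ) (x : ℝ) :
    regIncBeta x ((M+1:ℕ):ℝ) ((K+1:ℕ):ℝ)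
      = (∫ t in (0:ℝ)..x, t^M*(1-t)^K) / ((Nat.factorial M : ℝ) * (Nat.factorial K) / (Nat.factorial (M+K+1))) := by
  unfold regIncBeta
  have h1 : ((M+1:ℕ):ℝ) - 1 = ((M:ℕ):ℝ) := by push_cast; ring
  have h2 : ((K+1:ℕ):ℝ) - 1 = ((K:ℕ):ℝ) := by push_cast; ring
  rw [h1, h2]
  have g1 : Real.Gamma ((M+1:ℕ):ℝ) = Nat.factorial M := by
    push_cast; exact Real.Gamma_nat_eq_factorial M
  have g2 : Real.Gamma ((K+1:ℕ):ℝ) = Nat.factorial K := by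
    push_cast; exact Real.Gamma_nat_eq_factorial K
  have g3 : Real.Gamma (((M+1:ℕ):ℝ) + ((K+1:ℕ):ℝ)) = Nat.factorial (M+K+1) := by
    have : ((M+1:ℕ):ℝ) + ((K+1:ℕ):ℝ) = ((M+K+1:ℕ):ℝ) + 1 := by push_cast; ring
    rw [this]; exact_mod_cast Real.Gamma_nat_eq_factorial (M+K+1)
  rw [g1, g2, g3]
  congr 1
  simp [Real.rpow_natCast]

lemma recJ (M K : ℕ) (x : ℝ) :
    (∫ t in (0:ℝ)..x, t^M*(1-t)^(K+1))
      = (((K:ℝ)+1)*(∫ t in (0:ℝ)..x, t^M*(1-t)^K) + x^(M+1)*(1-x)^(K+1))/((M:ℝ)+(K:ℝ)+2) := by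
  have d0 : ∀ t : ℝ, HasDerivAt (fun t : ℝ => (1-t)) (-1) t := fun t => by
    simpa using (hasDerivAt_id t).const_sub 1
  have dd : ∀ t : ℝ, HasDerivAt (fun t : ℝ => t^(M+1)*(1-t)^(K+1))
      (((M:ℝ)+1)*(t^M*(1-t)^K) - ((M:ℝ)+(K:ℝ)+2)*(t^(M+1)*(1-t)^K)) t := by
    intro t
    have d1 : HasDerivAt (fun t : ℝ => t^(M+1)) ((↑(M+1))*t^M) t := by
      simpa using hasDerivAt_pow (M+1) t
    have d2 : HasDerivAt (fun t : ℝ => (1-t)^(K+1)) (↑(K+1)*(1-t)^K*(-1)) t := by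
      have h : HasDerivAt (fun t : ℝ => (1-t)^(K+1)) _ t := (d0 t).pow (K+1)
      simpa using h
    have : HasDerivAt (fun t : ℝ => t^(M+1)*(1-t)^(K+1)) _ t := d1.mul d2
    convert this using 1
    push_cast
    have e1 : t^(M+1) = t^M*t := pow_succ t M
    have e2 : (1-t)^(K+1) = (1-t)^K*(1-t) := pow_succ (1-t) K
    rw [e1, e2]; ring
  have hcont : Continuous (fun t : ℝ => ((M:ℝ)+1)*(t^M*(1-t)^K) - ((M:ℝ)+(K:ℝ)+2)*(t^(M+1)*(1-t)^K)) := by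
    fun_prop
  have hw : (∫ t in (0:ℝ)..x, (((M:ℝ)+1)*(t^M*(1-t)^K) - ((M:ℝ)+(K:ℝ)+2)*(t^(M+1)*(1-t)^K)))
      = x^(M+1)*(1-x)^(K+1) - ((0:ℝ)^(M+1)*(1-0)^(K+1)) := by
    exact intervalIntegral.integral_eq_sub_of_hasDerivAt (fun t _ => dd t)
      (hcont.intervalIntegrable 0 x)
  have hz : ((0:ℝ)^(M+1)*(1-0)^(K+1)) = 0 := by simp
  rw [hz, sub_zero] at hw
  have hig : IntervalIntegrable (fun t : ℝ => t^M*(1-t)^K) MeasureTheory.volume 0 x :=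
    (by fun_prop : Continuous (fun t : ℝ => t^M*(1-t)^K)).intervalIntegrable 0 x
  have hiw : IntervalIntegrable (fun t : ℝ => t^(M+1)*(1-t)^K) MeasureTheory.volume 0 x :=
    (by fun_prop : Continuous (fun t : ℝ => t^(M+1)*(1-t)^K)).intervalIntegrable 0 x
  rw [intervalIntegral.integral_sub ((hig.const_mul _)) ((hiw.const_mul _)),
    intervalIntegral.integral_const_mul, intervalIntegral.integral_const_mul] at hw
  have hsplit : (∫ t in (0:ℝ)..x, t^M*(1-t)^(K+1))
      = (∫ t in (0:ℝ)..x, t^M*(1-t)^K) - (∫ t in (0:ℝ)..x, t^(M+1)*(1-t)^K) := by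
    rw [← intervalIntegral.integral_sub hig hiw]
    congr 1
    funext t
    have e2 : (1-t)^(K+1) = (1-t)^K*(1-t) := pow_succ (1-t) K
    have e1 : t^(M+1) = t^M*t := pow_succ t M
    rw [e1, e2]; ring
  rw [hsplit]
  have hMK : ((M:ℝ)+(K:ℝ)+2) ≠ 0 := by positivity
  field_simp
  linarith [hw]



lemma step (M K : ℕ) :
    regIncBeta (((M+1:ℕ):ℝ)/(((M+1:ℕ):ℝ)+((K+1:ℕ):ℝ))) ((M+1:ℕ):ℝ) ((K+1:ℕ):ℝ)
      < regIncBeta (((M+1:ℕ):ℝ)/(((M+1:ℕ):ℝ)+((K+2:ℕ):ℝ))) ((M+1:ℕ):ℝ) ((K+2:ℕ):ℝ) := by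
  have hv : (((M+1:ℕ):ℝ)/(((M+1:ℕ):ℝ)+((K+1:ℕ):ℝ))) = ((M:ℝ)+1)/((M:ℝ)+(K:ℝ)+2) := by
    push_cast; ring_nf
  have hu : (((M+1:ℕ):ℝ)/(((M+1:ℕ):ℝ)+((K+2:ℕ):ℝ))) = ((M:ℝ)+1)/((M:ℝ)+(K:ℝ)+3) := by
    push_cast; ring_nf
  set u : ℝ := ((M:ℝ)+1)/((M:ℝ)+(K:ℝ)+3) with hudef
  set v : ℝ := ((M:ℝ)+1)/((M:ℝ)+(K:ℝ)+2) with hvdef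
  have h1 := rep M K v
  have h2 := rep M (K+1) u
  rw [hv, h1]
  have hK2 : ((K+2:ℕ):ℝ) = (((K+1)+1:ℕ):ℝ) := by push_cast; ring
  rw [hu, hK2, h2]
  -- rewrite RHS using recurrence
  rw [recJ M K u]
  -- factorial positivity
  have hf1 : (0:ℝ) < (Nat.factorial M : ℝ) := by exact_mod_cast Nat.factorial_pos M
  have hf2 : (0:ℝ) < (Nat.factorial K : ℝ) := by exact_mod_cast Nat.factorial_pos K
  have hf3 : (0:ℝ) < (Nat.factorial (M+K+1) : ℝ) := by exact_mod_cast Nat.factorial_pos (M+K+1)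
  have hfs1 : (Nat.factorial (K+1) : ℝ) = ((K:ℝ)+1) * (Nat.factorial K : ℝ) := by
    rw [Nat.factorial_succ]; push_cast; ring
  have hfs2 : (Nat.factorial (M+(K+1)+1) : ℝ) = ((M:ℝ)+(K:ℝ)+2) * (Nat.factorial (M+K+1) : ℝ) := by
    have : M+(K+1)+1 = (M+K+1)+1 := by omega
    rw [this, Nat.factorial_succ]; push_cast; ring
  rw [hfs1, hfs2]
  -- core inequality + interval splitting
  have hig : ∀ y z : ℝ, IntervalIntegrable (fun t : ℝ => t^M*(1-t)^K) MeasureTheory.volume y z :=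
    fun y z => (by fun_prop : Continuous (fun t : ℝ => t^M*(1-t)^K)).intervalIntegrable y z
  have hadj : (∫ t in (0:ℝ)..u, t^M*(1-t)^K) + (∫ t in u..v, t^M*(1-t)^K)
      = (∫ t in (0:ℝ)..v, t^M*(1-t)^K) :=
    intervalIntegral.integral_add_adjacent_intervals (hig 0 u) (hig u v)
  have hcore := core M K
  rw [← hudef, ← hvdef] at hcore
  set Ju : ℝ := (∫ t in (0:ℝ)..u, t^M*(1-t)^K)
  set Jv : ℝ := (∫ t in (0:ℝ)..v, t^M*(1-t)^K)
  set S : ℝ := u^(M+1)*(1-u)^(K+1)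
  have hJ : Jv < Ju + S/((K:ℝ)+1) := by
    have : Jv - Ju < S/((K:ℝ)+1) := by rw [← hadj]; simpa using hcore
    linarith
  -- final division algebra
  have hK0 : (0:ℝ) < (K:ℝ)+1 := by positivity
  have hMK : (0:ℝ) < (M:ℝ)+(K:ℝ)+2 := by positivity
  have hB : (0:ℝ) < (Nat.factorial M : ℝ) * (Nat.factorial K) / (Nat.factorial (M+K+1)) := by positivity
  have hrhs : ((((K:ℝ)+1)*Ju + S)/((M:ℝ)+(K:ℝ)+2))
        / ((Nat.factorial M : ℝ) * (((K:ℝ)+1) * (Nat.factorial K)) / (((M:ℝ)+(K:ℝ)+2) * (Nat.factorial (M+K+1))))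
      = (Ju + S/((K:ℝ)+1)) / ((Nat.factorial M : ℝ) * (Nat.factorial K) / (Nat.factorial (M+K+1))) := by
    field_simp
  rw [hrhs]
  gcongr


/-- For positive integers m and n, `I(m/(m+n), m, n)` is strictly increasing in n
for fixed m. -/
theorem regIncBeta_strict_mono_in_n
    (m : ℕ) (hm : 0 < m) (n₁ n₂ : ℕ) (hn₁ : 0 < n₁) (h : n₁ < n₂) :
    regIncBeta ((m : ℝ) / (m + n₁)) m n₁ < regIncBeta ((m : ℝ) / (m + n₂)) m n₂ := by

  obtain ⟨M, rfl⟩ : ∃ M, m = M+1 := ⟨m-1, by omega⟩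
  have hstep : ∀ k : ℕ, 0 < k →
      regIncBeta (((M+1:ℕ):ℝ) / (((M+1:ℕ):ℝ) + (k:ℝ))) ((M+1:ℕ):ℝ) (k:ℝ)
        < regIncBeta (((M+1:ℕ):ℝ) / (((M+1:ℕ):ℝ) + ((k+1:ℕ):ℝ))) ((M+1:ℕ):ℝ) ((k+1:ℕ):ℝ) := by
    intro k hk
    obtain ⟨K, rfl⟩ : ∃ K, k = K+1 := ⟨k-1, by omega⟩
    have := step M K
    convert this using 3 <;> push_cast <;> ring
  induction n₂, h using Nat.le_induction with
  | base => exact hstep n₁ hn₁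
  | succ n hn ih =>
      calc regIncBeta ((((M+1:ℕ)) : ℝ) / ((M+1:ℕ) + n₁)) (M+1:ℕ) n₁
          < regIncBeta ((((M+1:ℕ)) : ℝ) / ((M+1:ℕ) + n)) (M+1:ℕ) n := ih
        _ < _ := by
            have := hstep n (by omega)
            convert this using 3 <;> push_cast <;> ring
end

section
/- Let T_m ~ Binomial(m+n-1, m/(m+n)). Then P(T_m ≥ m) is strictly decreasing in m for fixed positive integer n. -/
set_option maxHeartbeats 1000000

open Finset

private noncomputable def Fb (M k : ℕ) (x : ℝ) : ℝ :=
  ∑ j ∈ Finset.Icc k M, (M.choose j : ℝ) * x ^ j * (1 - x) ^ (M - j)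

private lemma sum_Icc_shift (f : ℕ → ℝ) (a b : ℕ) :
    ∑ j ∈ Finset.Icc (a + 1) (b + 1), f j = ∑ i ∈ Finset.Icc a b, f (i + 1) := by
  rw [← Finset.map_add_right_Icc, Finset.sum_map]
  rfl

private lemma Fb_pascal (M k : ℕ) (hk : k ≤ M + 1) (x : ℝ) :
    Fb (M + 2) (k + 1) x
      = Fb (M + 1) k x
        - ((M + 1).choose k : ℝ) * x ^ k * (1 - x) ^ (M + 1 - k) * (1 - x) := by
  have key : Fb (M + 2) (k + 1) x
      = x * Fb (M + 1) k x + (1 - x) * Fb (M + 1) (k + 1) x := by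
    unfold Fb
    rw [show M + 2 = (M + 1) + 1 from rfl, sum_Icc_shift]
    have h1 : ∀ i ∈ Finset.Icc k (M + 1),
        ((M + 1 + 1).choose (i + 1) : ℝ) * x ^ (i + 1) * (1 - x) ^ (M + 1 + 1 - (i + 1))
          = x * ((M + 1).choose i * x ^ i * (1 - x) ^ (M + 1 - i))
            + (1 - x) * ((M + 1).choose (i + 1) * x ^ (i + 1) * (1 - x) ^ (M + 1 - (i + 1))) := by
      intro i hi
      simp only [Finset.mem_Icc] at hi
      rw [Nat.choose_succ_succ (M + 1) i]
      have e1 : M + 1 + 1 - (i + 1) = M + 1 - i := by omega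
      rw [e1]
      push_cast
      by_cases hiM : i ≤ M
      · have e2 : M + 1 - i = (M - i) + 1 := by omega
        have e3 : M + 1 - (i + 1) = M - i := by omega
        rw [e2, pow_succ]
        ring
      · have hi2 : i = M + 1 := by omega
        subst hi2
        simp [Nat.choose_eq_zero_of_lt]
        ring
    rw [Finset.sum_congr rfl h1, Finset.sum_add_distrib, ← Finset.mul_sum, ← Finset.mul_sum]
    congr 1
    congr 1
    rw [← sum_Icc_shift (fun j => ((M + 1).choose j : ℝ) * x ^ j * (1 - x) ^ (M + 1 - j)) k (M + 1)]
    rw [Finset.sum_Icc_succ_top (by omega : k + 1 ≤ M + 1 + 1)]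
    rw [show (M + 1 + 1 : ℕ) = M + 2 from rfl]
    simp [Nat.choose_eq_zero_of_lt, Fb]
  have peel : Fb (M + 1) k x
      = ((M + 1).choose k : ℝ) * x ^ k * (1 - x) ^ (M + 1 - k) + Fb (M + 1) (k + 1) x := by
    unfold Fb
    rw [Finset.Icc_eq_cons_Ioc hk, Finset.sum_cons, ← Finset.Icc_add_one_left_eq_Ioc]
  rw [key, peel]
  ring

private lemma Fb_hasDeriv (M k : ℕ) (hk : k ≤ M + 1) (x : ℝ) :
    HasDerivAt (fun y => Fb (M + 2) (k + 1) y)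
      ((M + 2 : ℝ) * ((M + 1).choose k : ℝ) * x ^ k * (1 - x) ^ (M + 1 - k)) x := by
  set h : ℕ → ℝ := fun i => (M + 2 : ℝ) * ((M + 1).choose i : ℝ) * x ^ i * (1 - x) ^ (M + 1 - i)
    with hh
  have funeq : (fun y => Fb (M + 2) (k + 1) y)
      = fun y => ∑ i ∈ Finset.Icc k (M + 1),
          ((M + 2).choose (i + 1) : ℝ) * y ^ (i + 1) * (1 - y) ^ (M + 1 - i) := by
    funext y
    unfold Fb
    rw [show M + 2 = (M + 1) + 1 from rfl, sum_Icc_shift]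
    refine Finset.sum_congr rfl fun i hi => ?_
    have : M + 1 + 1 - (i + 1) = M + 1 - i := by omega
    rw [this]
  rw [funeq]
  have main : HasDerivAt
      (fun y => ∑ i ∈ Finset.Icc k (M + 1),
          ((M + 2).choose (i + 1) : ℝ) * y ^ (i + 1) * (1 - y) ^ (M + 1 - i))
      (∑ i ∈ Finset.Icc k (M + 1), (h i - h (i + 1))) x := by
    apply HasDerivAt.fun_sum
    intro i hi
    simp only [Finset.mem_Icc] at hi
    have h1 : HasDerivAt (fun y : ℝ => y ^ (i + 1)) (((i : ℝ) + 1) * x ^ i) x := by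
      simpa using hasDerivAt_pow (i + 1) x
    have hlin : HasDerivAt (fun y : ℝ => 1 - y) (-1) x := by
      simpa using (hasDerivAt_const x (1 : ℝ)).fun_sub (hasDerivAt_id x)
    have h2 : HasDerivAt (fun y : ℝ => (1 - y) ^ (M + 1 - i))
        ((((M + 1 - i : ℕ) : ℝ) * (1 - x) ^ (M - i)) * (-1)) x := by
      have := (hasDerivAt_pow (M + 1 - i) (1 - x)).comp x hlin
      have e : M + 1 - i - 1 = M - i := by omega
      rw [e] at this
      exact this
    have hprod := (h1.const_mul ((M + 2).choose (i + 1) : ℝ)).fun_mul h2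
    have hfun : (fun y : ℝ => ((M + 2).choose (i + 1) : ℝ) * y ^ (i + 1) * (1 - y) ^ (M + 1 - i))
        = fun y => (((M + 2).choose (i + 1) : ℝ) * y ^ (i + 1)) * (1 - y) ^ (M + 1 - i) := by
      funext y; ring
    rw [hfun]
    convert hprod using 1
    case e'_4 => rfl
    -- equality of derivative values
    have e1 : ((M + 2).choose (i + 1) : ℝ) * ((i : ℝ) + 1) = (M + 2 : ℝ) * ((M + 1).choose i : ℝ) := by
      have := Nat.add_one_mul_choose_eq (M + 1) i
      have : (M + 2) * (M + 1).choose i = (M + 2).choose (i + 1) * (i + 1) := this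
      exact_mod_cast (by exact_mod_cast this.symm : ((M + 2).choose (i + 1) * (i + 1) : ℕ) = (M + 2) * (M + 1).choose i)
    have e2 : ((M + 2).choose (i + 1) : ℝ) * ((M + 1 - i : ℕ) : ℝ)
        = (M + 2 : ℝ) * ((M + 1).choose (i + 1) : ℝ) := by
      have n1 : (M + 2).choose (i + 1 + 1) * (i + 1 + 1) = (M + 2).choose (i + 1) * (M + 2 - (i + 1)) :=
        Nat.choose_succ_right_eq (M + 2) (i + 1)
      have n2 : (M + 2) * (M + 1).choose (i + 1) = (M + 2).choose (i + 1 + 1) * (i + 1 + 1) :=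
        Nat.add_one_mul_choose_eq (M + 1) (i + 1)
      have n3 : (M + 2).choose (i + 1) * (M + 1 - i) = (M + 2) * (M + 1).choose (i + 1) := by
        rw [n2, n1]; congr 1; omega
      exact_mod_cast congrArg (Nat.cast : ℕ → ℝ) n3
    have e3 : M + 1 - (i + 1) = M - i := by omega
    rw [hh]
    simp only [e3]
    calc (M + 2 : ℝ) * ((M + 1).choose i : ℝ) * x ^ i * (1 - x) ^ (M + 1 - i)
          - (M + 2 : ℝ) * ((M + 1).choose (i + 1) : ℝ) * x ^ (i + 1) * (1 - x) ^ (M - i)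
        = (((M + 2).choose (i + 1) : ℝ) * ((i : ℝ) + 1)) * x ^ i * (1 - x) ^ (M + 1 - i)
          - (((M + 2).choose (i + 1) : ℝ) * ((M + 1 - i : ℕ) : ℝ)) * x ^ (i + 1) * (1 - x) ^ (M - i) := by
          rw [e1, e2]
      _ = ((M + 2).choose (i + 1) : ℝ) * (((i : ℝ) + 1) * x ^ i) * (1 - x) ^ (M + 1 - i)
          + ((M + 2).choose (i + 1) : ℝ) * x ^ (i + 1) * ((((M + 1 - i : ℕ) : ℝ) * (1 - x) ^ (M - i)) * (-1)) := by
          ring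
  have tele : ∑ i ∈ Finset.Icc k (M + 1), (h i - h (i + 1)) = h k := by
    rw [← Finset.Ico_add_one_right_eq_Icc, Finset.sum_Ico_eq_sum_range]
    have t2 := Finset.sum_range_sub' (fun i => h (k + i)) (M + 1 + 1 - k)
    simp only [← add_assoc] at t2
    rw [t2, Nat.add_zero, show k + (M + 1 + 1 - k) = M + 2 from by omega]
    have hz : h (M + 2) = 0 := by
      rw [hh]
      simp [Nat.choose_eq_zero_of_lt (by omega : M + 1 < M + 2)]
    rw [hz, sub_zero]
  rw [tele] at main
  exact main

private lemma g_strictAnti (a b : ℕ) (ha : 1 ≤ a) (hb : 1 ≤ b) :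
    StrictAntiOn (fun t : ℝ => t ^ a * (1 - t) ^ b) (Set.Icc ((a : ℝ) / ((a : ℝ) + b)) 1) := by
  have ha' : (0 : ℝ) < a := by exact_mod_cast ha
  have hb' : (0 : ℝ) < b := by exact_mod_cast hb
  have hab : (0 : ℝ) < (a : ℝ) + b := by positivity
  apply strictAntiOn_of_deriv_neg (convex_Icc _ _)
  · fun_prop
  · intro t ht
    rw [interior_Icc] at ht
    have h1 : (a : ℝ) / ((a : ℝ) + b) < t := ht.1
    have h2 : t < 1 := ht.2
    have ht0 : 0 < t := lt_of_le_of_lt (by positivity) h1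
    have ht1 : 0 < 1 - t := by linarith
    have hlin : HasDerivAt (fun y : ℝ => 1 - y) (-1) t := by
      simpa using (hasDerivAt_const t (1 : ℝ)).fun_sub (hasDerivAt_id t)
    have hpow2 : HasDerivAt (fun y : ℝ => (1 - y) ^ b) (((b : ℝ) * (1 - t) ^ (b - 1)) * (-1)) t :=
      (hasDerivAt_pow b (1 - t)).comp t hlin
    have hd : HasDerivAt (fun y : ℝ => y ^ a * (1 - y) ^ b)
        (((a : ℝ) * t ^ (a - 1)) * (1 - t) ^ b + t ^ a * (((b : ℝ) * (1 - t) ^ (b - 1)) * (-1))) t :=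
      (hasDerivAt_pow a t).mul hpow2
    rw [hd.deriv]
    have e1 : t ^ a = t ^ (a - 1) * t := by
      rw [← pow_succ]; congr 1; omega
    have e2 : (1 - t) ^ b = (1 - t) ^ (b - 1) * (1 - t) := by
      rw [← pow_succ]; congr 1; omega
    have hp1 : 0 < t ^ (a - 1) := pow_pos ht0 _
    have hp2 : 0 < (1 - t) ^ (b - 1) := pow_pos ht1 _
    have key : (a : ℝ) < t * ((a : ℝ) + b) := (div_lt_iff₀ hab).mp h1
    rw [e1, e2]
    nlinarith [mul_pos hp1 hp2]

private lemma Fb_continuous (M k : ℕ) : Continuous fun x : ℝ => Fb M k x := by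
  unfold Fb
  exact continuous_finset_sum _ fun j _ => by fun_prop

private lemma step_lemma (n : ℕ) (hn : 0 < n) (m : ℕ) (hm : 0 < m) :
    Fb (m + 1 + n - 1) (m + 1) (((m + 1 : ℕ) : ℝ) / (((m + 1 : ℕ) : ℝ) + n))
      < Fb (m + n - 1) m ((m : ℝ) / ((m : ℝ) + n)) := by
  obtain ⟨M, hM⟩ : ∃ M, m + n = M + 2 := ⟨m + n - 2, by omega⟩
  have hMk : m ≤ M + 1 := by omega
  have i1 : m + 1 + n - 1 = M + 2 := by omega
  have i2 : m + n - 1 = M + 1 := by omega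
  rw [i1, i2]
  have hm' : (0 : ℝ) < m := by exact_mod_cast hm
  have hn' : (0 : ℝ) < n := by exact_mod_cast hn
  have castM : (m : ℝ) + n = (M : ℝ) + 2 := by exact_mod_cast congrArg (Nat.cast : ℕ → ℝ) hM
  set p : ℝ := (m : ℝ) / ((m : ℝ) + n) with hp
  set p' : ℝ := ((m : ℝ) + 1) / ((m : ℝ) + n + 1) with hp'
  have cast1 : ((m + 1 : ℕ) : ℝ) / (((m + 1 : ℕ) : ℝ) + n) = p' := by
    rw [hp']; push_cast; ring_nf
  rw [cast1]
  have hmn : (0 : ℝ) < (m : ℝ) + n := by positivity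
  have hmn1 : (0 : ℝ) < (m : ℝ) + n + 1 := by positivity
  have hp0 : 0 < p := by positivity
  have hp1 : p < 1 := by rw [hp, div_lt_one hmn]; linarith
  have hp'1 : p' < 1 := by rw [hp', div_lt_one hmn1]; linarith
  have hpp' : p < p' := by
    rw [hp, hp', div_lt_div_iff₀ hmn hmn1]; nlinarith
  set C : ℝ := ((M + 1).choose m : ℝ) with hC
  have hCpos : 0 < C := by
    rw [hC]; exact_mod_cast Nat.choose_pos hMk
  set K : ℝ := C * p ^ m * (1 - p) ^ n with hK
  set c : ℝ := ((M : ℝ) + 2) * C * p ^ m * (1 - p) ^ n * (((M : ℝ) + 3) / n) with hc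
  have hq : 0 < 1 - p := by linarith
  have hq' : 0 < 1 - p' := by linarith
  have hnm1 : M + 1 - m = n - 1 := by omega
  -- strict antitonicity of the auxiliary function ψ
  have hanti : StrictAntiOn (fun x => Fb (M + 2) (m + 1) x - c * x) (Set.Icc p p') := by
    apply strictAntiOn_of_deriv_neg (convex_Icc _ _)
    · exact ((Fb_continuous (M + 2) (m + 1)).sub (continuous_const.mul continuous_id)).continuousOn
    · intro t ht
      rw [interior_Icc] at ht
      have hcx : HasDerivAt (fun x : ℝ => c * x) c t := by
        simpa using (hasDerivAt_id t).const_mul c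
      have hdt := (Fb_hasDeriv M m hMk t).fun_sub hcx
      rw [hdt.deriv]
      have ht0 : 0 < t := hp0.trans ht.1
      have ht1 : t < 1 := ht.2.trans hp'1
      have htq : 0 < 1 - t := by linarith
      -- g t < g p
      have hgs := g_strictAnti m n hm hn
        (Set.mem_Icc.mpr ⟨le_rfl, hp1.le⟩) (Set.mem_Icc.mpr ⟨ht.1.le, ht1.le⟩) ht.1
      simp only at hgs
      -- hgs : t ^ m * (1 - t) ^ n < p ^ m * (1 - p) ^ n
      have hpow : 0 < t ^ m * (1 - t) ^ (n - 1) := by positivity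
      have hsplit : t ^ m * (1 - t) ^ (n - 1) * (1 - t) = t ^ m * (1 - t) ^ n := by
        rw [mul_assoc, ← pow_succ]; congr 2; omega
      have h1t : 1 - p' < 1 - t := by linarith [ht.2]
      have hA : t ^ m * (1 - t) ^ (n - 1) * (1 - p') < p ^ m * (1 - p) ^ n := by
        calc t ^ m * (1 - t) ^ (n - 1) * (1 - p')
            < t ^ m * (1 - t) ^ (n - 1) * (1 - t) := by
              exact mul_lt_mul_of_pos_left h1t hpow
          _ = t ^ m * (1 - t) ^ n := hsplit
          _ < p ^ m * (1 - p) ^ n := hgs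
      -- 1 - p' = n / (M + 3)
      have hq'eq : 1 - p' = (n : ℝ) / ((M : ℝ) + 3) := by
        rw [hp', eq_div_iff (by linarith : ((M : ℝ) + 3) ≠ 0)]
        have : (m : ℝ) + n + 1 = (M : ℝ) + 3 := by linarith [castM]
        rw [this]
        field_simp
        linarith [castM]
      rw [hq'eq] at hA
      have hpos : (0 : ℝ) < ((M : ℝ) + 2) * C * (((M : ℝ) + 3) / n) := by positivity
      have hmul := mul_lt_mul_of_pos_left hA hpos
      have eqL : ((M : ℝ) + 2) * C * (((M : ℝ) + 3) / n)
            * (t ^ m * (1 - t) ^ (n - 1) * ((n : ℝ) / ((M : ℝ) + 3)))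
          = ((M : ℝ) + 2) * C * (t ^ m * (1 - t) ^ (n - 1)) := by
        field_simp
      rw [eqL] at hmul
      rw [hnm1]
      have : ((M : ℝ) + 2) * C * (t ^ m * (1 - t) ^ (n - 1))
          < ((M : ℝ) + 2) * C * (p ^ m * (1 - p) ^ n) * (((M : ℝ) + 3) / n) := by
        calc ((M : ℝ) + 2) * C * (t ^ m * (1 - t) ^ (n - 1))
            < ((M : ℝ) + 2) * C * (((M : ℝ) + 3) / n) * (p ^ m * (1 - p) ^ n) := hmul
          _ = ((M : ℝ) + 2) * C * (p ^ m * (1 - p) ^ n) * (((M : ℝ) + 3) / n) := by ring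
      rw [hc]
      nlinarith [this]
  -- apply antitonicity on the endpoints
  have hψ := hanti ⟨le_rfl, hpp'.le⟩ ⟨hpp'.le, le_rfl⟩ hpp'
  simp only at hψ
  -- c * (p' - p) = K
  have hdiff : p' - p = (n : ℝ) / (((M : ℝ) + 2) * ((M : ℝ) + 3)) := by
    have hn2 : (n : ℝ) = (M : ℝ) + 2 - m := by linarith
    rw [hp, hp', castM, hn2]
    have hM2 : ((M : ℝ) + 2) ≠ 0 := by positivity
    have hM3 : ((M : ℝ) + 2 + 1) ≠ 0 := by positivity
    field_simp
    ring
  have hcK : c * (p' - p) = K := by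
    rw [hc, hK, hdiff]
    have h1 : ((M : ℝ) + 2) ≠ 0 := by positivity
    have h2 : ((M : ℝ) + 3) ≠ 0 := by positivity
    have h3 : (n : ℝ) ≠ 0 := hn'.ne'
    field_simp
  -- Pascal identity at p
  have hpas := Fb_pascal M m hMk p
  have hKexp : C * p ^ m * (1 - p) ^ (M + 1 - m) * (1 - p) = K := by
    rw [hK, hnm1, mul_assoc (C * p ^ m), ← pow_succ]
    congr 2
    omega
  rw [hC] at hKexp
  linarith [hψ, hcK, hpas, hKexp]

/-- P(T_m ≥ m) for T_m ~ Binomial(m+n-1, m/(m+n)) is strictly decreasing in m,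
for fixed positive n. -/
theorem binomial_tail_strict_anti
    (n : ℕ) (hn : 0 < n) (m₁ m₂ : ℕ) (hm₁ : 0 < m₁) (h : m₁ < m₂) :
    (∑ j ∈ Finset.Icc m₂ (m₂ + n - 1),
        ((m₂ + n - 1).choose j : ℝ) * ((m₂ : ℝ) / (m₂ + n)) ^ j *
          (1 - (m₂ : ℝ) / (m₂ + n)) ^ (m₂ + n - 1 - j))
      < ∑ j ∈ Finset.Icc m₁ (m₁ + n - 1),
        ((m₁ + n - 1).choose j : ℝ) * ((m₁ : ℝ) / (m₁ + n)) ^ j *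
          (1 - (m₁ : ℝ) / (m₁ + n)) ^ (m₁ + n - 1 - j) := by
  have key : ∀ a : ℕ, 0 < a → ∀ b : ℕ, a < b →
      Fb (b + n - 1) b ((b : ℝ) / ((b : ℝ) + n))
        < Fb (a + n - 1) a ((a : ℝ) / ((a : ℝ) + n)) := by
    intro a ha b hab
    induction b, hab using Nat.le_induction with
    | base => exact step_lemma n hn a ha
    | succ b hb ih =>
      exact lt_trans (step_lemma n hn b (by omega)) ih
  exact key m₁ hm₁ m₂ h
end

section
/- Let S_m be a Poisson random variable with mean m, where m is a positive integer. Then P(S_m ≥ m) is strictly decreasing in m. -/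
open Finset Set

/-- The finite partial sum `∑_{k<n} e^{-x} x^k / k!`. -/
noncomputable def psum (n : ℕ) (x : ℝ) : ℝ :=
  ∑ k ∈ Finset.range n, Real.exp (-x) * x ^ k / k.factorial

lemma hasDerivAt_psum (n : ℕ) (x : ℝ) :
    HasDerivAt (psum (n + 1)) (-(Real.exp (-x) * x ^ n / n.factorial)) x := by
  induction n with
  | zero =>
    have : psum 1 = fun x : ℝ => Real.exp (-x) := by
      funext y; simp [psum]
    rw [this]
    simpa [Function.comp_def] using ((Real.hasDerivAt_exp (-x)).comp x ((hasDerivAt_id x).neg))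
  | succ n ih =>
    have hterm : HasDerivAt (fun y : ℝ => Real.exp (-y) * y ^ (n + 1) / (n + 1).factorial)
        ((-(Real.exp (-x)) * x ^ (n + 1) + Real.exp (-x) * ((n + 1) * x ^ n)) /
          (n + 1).factorial) x := by
      have hexp : HasDerivAt (fun y : ℝ => Real.exp (-y)) (-(Real.exp (-x))) x := by
        simpa [Function.comp_def] using ((Real.hasDerivAt_exp (-x)).comp x ((hasDerivAt_id x).neg))
      have hpow : HasDerivAt (fun y : ℝ => y ^ (n + 1)) ((n + 1 : ℕ) * x ^ n) x := by
        simpa using hasDerivAt_pow (n + 1) x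
      have := (hexp.mul hpow).div_const ((n + 1).factorial : ℝ)
      refine this.congr_deriv ?_
      push_cast
      ring
    have hsum : psum (n + 2) = fun y : ℝ =>
        psum (n + 1) y + Real.exp (-y) * y ^ (n + 1) / (n + 1).factorial := by
      funext y; simp [psum, Finset.sum_range_succ]
    rw [hsum]
    have := ih.add hterm
    refine this.congr_deriv ?_
    have hfact : ((n + 1).factorial : ℝ) = (n + 1) * n.factorial := by
      rw [Nat.factorial_succ]; push_cast; ring
    have hne : ((n + 1 : ℕ) : ℝ) ≠ 0 := by positivity
    have hne' : (n.factorial : ℝ) ≠ 0 := by positivity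
    rw [hfact]
    field_simp
    ring

lemma exp_pow_lt {m : ℕ} (hm : 0 < m) {c : ℝ} (hc : (m : ℝ) < c) :
    Real.exp (-c) * c ^ m < Real.exp (-(m : ℝ)) * (m : ℝ) ^ m := by
  have hm0 : (0 : ℝ) < m := by exact_mod_cast hm
  have hc0 : (0 : ℝ) < c := hm0.trans hc
  have hlog : Real.log (c / m) < c / m - 1 :=
    Real.log_lt_sub_one_of_pos (by positivity) (by
      intro hcontra
      have : c = m := by field_simp at hcontra; linarith
      linarith)
  have key : (m : ℝ) * Real.log c - c < (m : ℝ) * Real.log m - m := by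
    rw [Real.log_div (ne_of_gt hc0) (ne_of_gt hm0)] at hlog
    have h2 : (m : ℝ) * (Real.log c - Real.log m) < (m : ℝ) * (c / m - 1) :=
      (mul_lt_mul_iff_right₀ hm0).2 hlog
    have h3 : (m : ℝ) * (c / m - 1) = c - m := by field_simp
    nlinarith [h2, h3]
  have e1 : Real.exp (-c) * c ^ m = Real.exp ((m : ℝ) * Real.log c - c) := by
    rw [Real.exp_sub, Real.exp_nat_mul, Real.exp_log hc0, Real.exp_neg]
    ring
  have e2 : Real.exp (-(m : ℝ)) * (m : ℝ) ^ m = Real.exp ((m : ℝ) * Real.log m - m) := by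
    rw [Real.exp_sub, Real.exp_nat_mul, Real.exp_log hm0, Real.exp_neg]
    ring
  rw [e1, e2]
  exact Real.exp_lt_exp.2 key

/-- One step: the "head" sum strictly increases. -/
lemma psum_step {m : ℕ} (hm : 0 < m) : psum m (m : ℝ) < psum (m + 1) ((m + 1 : ℕ) : ℝ) := by
  -- MVT for psum (m+1) on [m, m+1]
  have hab : (m : ℝ) < (m : ℝ) + 1 := by linarith
  obtain ⟨c, hc, hceq⟩ := exists_hasDerivAt_eq_slope (psum (m + 1))
    (fun x => -(Real.exp (-x) * x ^ m / m.factorial)) hab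
    (by
      have : ∀ x ∈ Icc (m : ℝ) ((m : ℝ) + 1), HasDerivAt (psum (m + 1))
          (-(Real.exp (-x) * x ^ m / m.factorial)) x := fun x _ => hasDerivAt_psum m x
      exact fun x hx => ((this x hx).continuousAt.continuousWithinAt))
    (fun x _ => hasDerivAt_psum m x)
  -- psum m m = psum (m+1) m - e^{-m} m^m / m!
  have hsplit : psum (m + 1) (m : ℝ) =
      psum m (m : ℝ) + Real.exp (-(m : ℝ)) * (m : ℝ) ^ m / m.factorial := by
    simp [psum, Finset.sum_range_succ]
  have hslope : psum (m + 1) ((m : ℝ) + 1) - psum (m + 1) (m : ℝ) =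
      -(Real.exp (-c) * c ^ m / m.factorial) := by
    rw [hceq]; ring_nf
  have hlt : Real.exp (-c) * c ^ m < Real.exp (-(m : ℝ)) * (m : ℝ) ^ m :=
    exp_pow_lt hm hc.1
  have hfact : (0 : ℝ) < m.factorial := by positivity
  have hcast : ((m + 1 : ℕ) : ℝ) = (m : ℝ) + 1 := by push_cast; ring
  have hdiv : Real.exp (-c) * c ^ m / m.factorial
      < Real.exp (-(m : ℝ)) * (m : ℝ) ^ m / m.factorial := by gcongr
  have : psum m (m : ℝ) < psum (m + 1) ((m : ℝ) + 1) := by linarith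
  rw [hcast]
  exact this

lemma tail_eq (m : ℕ) :
    (∑' k : ℕ, if m ≤ k then Real.exp (-(m : ℝ)) * (m : ℝ) ^ k / k.factorial else 0)
      = 1 - psum m m := by
  set x : ℝ := (m : ℝ) with hx
  set p : ℕ → ℝ := fun k => Real.exp (-x) * x ^ k / k.factorial with hp
  have hsum : Summable p := by
    have := (Real.summable_pow_div_factorial x).mul_left (Real.exp (-x))
    simpa [hp, mul_div_assoc] using this
  have htsum : ∑' k, p k = 1 := by
    have h1 : ∑' k, p k = Real.exp (-x) * ∑' k, x ^ k / k.factorial := by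
      simp_rw [hp, mul_div_assoc]
      exact tsum_mul_left
    have h2 : ∑' k : ℕ, x ^ k / k.factorial = Real.exp x := by
      rw [Real.exp_eq_exp_ℝ, NormedSpace.exp_eq_tsum_div]
    rw [h1, h2, ← Real.exp_add]
    simp
  set g : ℕ → ℝ := fun k => if k < m then p k else 0 with hg
  have hgsum : Summable g := by
    apply summable_of_ne_finset_zero (s := Finset.range m)
    intro k hk
    simp only [Finset.mem_range] at hk
    simp [hg, hk]
  have hfg : (fun k => if m ≤ k then p k else 0) = fun k => p k - g k := by
    funext k
    by_cases hk : m ≤ k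
    · simp [hg, hk, Nat.not_lt.2 hk]
    · simp [hg, hk, Nat.lt_of_not_le hk]
  have hgts : ∑' k, g k = psum m x := by
    rw [tsum_eq_sum (s := Finset.range m) (by
      intro k hk
      simp only [Finset.mem_range] at hk
      simp [hg, hk])]
    apply Finset.sum_congr rfl
    intro k hk
    simp only [Finset.mem_range] at hk
    simp [hg, hk, psum, hp]
  calc (∑' k : ℕ, if m ≤ k then p k else 0) = ∑' k, (p k - g k) := by rw [hfg]
    _ = (∑' k, p k) - ∑' k, g k := Summable.tsum_sub hsum hgsum
    _ = 1 - psum m x := by rw [htsum, hgts]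

lemma psum_mono {m₁ m₂ : ℕ} (hm₁ : 0 < m₁) (h : m₁ < m₂) : psum m₁ m₁ < psum m₂ m₂ := by
  induction m₂, h using Nat.le_induction with
  | base => exact psum_step hm₁
  | succ n hn ih => exact ih.trans (psum_step (by omega))

/-- For S_m ~ Poisson(m), P(S_m ≥ m) is strictly decreasing in the positive integer m. -/
theorem poisson_tail_strict_anti
    (m₁ m₂ : ℕ) (hm₁ : 0 < m₁) (h : m₁ < m₂) :
    (∑' k : ℕ, if m₂ ≤ k then Real.exp (-(m₂ : ℝ)) * (m₂ : ℝ) ^ k / k.factorial else 0)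
      < ∑' k : ℕ, if m₁ ≤ k then Real.exp (-(m₁ : ℝ)) * (m₁ : ℝ) ^ k / k.factorial else 0 := by
  rw [tail_eq m₁, tail_eq m₂]
  have := psum_mono hm₁ h
  linarith
end

section
/- Let R_m have a Gamma(m,1) distribution, m a positive integer. Then P(R_m ≤ m) is strictly decreasing in m. -/
open MeasureTheory intervalIntegral

private lemma contAux (k : ℕ) : Continuous (fun x : ℝ => Real.exp (-x) * x ^ k) := by
  continuity

private lemma intbleAux (k : ℕ) (a b : ℝ) :
    IntervalIntegrable (fun x : ℝ => Real.exp (-x) * x ^ k) volume a b :=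
  (contAux k).intervalIntegrable a b

private lemma ibp (k : ℕ) (T : ℝ) :
    ∫ x in (0:ℝ)..T, Real.exp (-x) * x ^ (k+1)
      = (k+1) * (∫ x in (0:ℝ)..T, Real.exp (-x) * x ^ k) - Real.exp (-T) * T ^ (k+1) := by
  have hderiv : ∀ x ∈ Set.uIcc (0:ℝ) T,
      HasDerivAt (fun y : ℝ => -(Real.exp (-y) * y ^ (k+1)))
        (Real.exp (-x) * x ^ (k+1) - (k+1) * (Real.exp (-x) * x ^ k)) x := by
    intro x _
    have h1 : HasDerivAt (fun y : ℝ => Real.exp (-y)) (Real.exp (-x) * (-1)) x :=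
      (hasDerivAt_neg x).exp
    have h2 : HasDerivAt (fun y : ℝ => y ^ (k+1)) ((k+1) * x ^ k) x := by
      simpa using hasDerivAt_pow (k+1) x
    have h3 := (h1.mul h2).neg
    refine h3.congr_deriv ?_
    push_cast
    ring
  have hint : IntervalIntegrable
      (fun x : ℝ => Real.exp (-x) * x ^ (k+1) - (k+1) * (Real.exp (-x) * x ^ k))
      volume 0 T := ((intbleAux (k+1) 0 T)).sub ((intbleAux k 0 T).const_mul _)
  have key := intervalIntegral.integral_eq_sub_of_hasDerivAt hderiv hint
  rw [intervalIntegral.integral_sub (intbleAux (k+1) 0 T) ((intbleAux k 0 T).const_mul _)] at key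
  have h0 : (0:ℝ) ^ (k+1) = 0 := by simp
  rw [h0] at key
  simp only [mul_zero, neg_zero, sub_zero] at key
  rw [intervalIntegral.integral_const_mul] at key
  linarith [key]

private lemma expNegLB (c : ℝ) (hc0 : 0 < c) (hc1 : c ≤ 1) :
    1 - c + c^2/2 - c^3/6 + c^4/24 - c^5/100 ≤ Real.exp (-c) := by
  have habs : |(-c)| ≤ 1 := by rw [abs_neg, abs_of_pos hc0]; exact hc1
  have h := Real.exp_bound habs (n := 5) (by norm_num)
  have hsum : ∑ m ∈ Finset.range 5, (-c) ^ m / (m.factorial : ℝ)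
      = 1 - c + c^2/2 - c^3/6 + c^4/24 := by
    simp [Finset.sum_range_succ, Nat.factorial]
    ring
  rw [hsum] at h
  have h2 : |(-c)| ^ 5 * ((5:ℕ).succ / ((5:ℕ).factorial * (5:ℕ) : ℝ)) = c^5/100 := by
    rw [abs_neg, abs_of_pos hc0]
    norm_num [Nat.factorial]
    ring
  rw [h2] at h
  have := abs_sub_le_iff.1 h
  linarith [this.2]

private lemma expLt (N : ℝ) (hN : 1 ≤ N) :
    Real.exp (2/(N+1)) < 1 + 2/N := by
  have hN0 : (0:ℝ) < N := by linarith
  have hN10 : (0:ℝ) < N + 1 := by linarith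
  set c : ℝ := 2/(N+1) with hc
  have hc0 : 0 < c := by positivity
  have hc1 : c ≤ 1 := by rw [hc, div_le_one hN10]; linarith
  have hcN : c * (N + 1) = 2 := by rw [hc]; field_simp
  -- key : N < (N+2) * exp (-c)
  have hkey : N < (N + 2) * Real.exp (-c) := by
    have hlb := expNegLB c hc0 hc1
    nlinarith [pow_pos hc0 3, pow_pos hc0 5, sq_nonneg c, Real.exp_pos (-c),
      mul_pos (pow_pos hc0 3) hc0, mul_pos hc0 hc0]
  -- conclude
  have hmul : Real.exp c * Real.exp (-c) = 1 := by
    rw [← Real.exp_add]; simp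
  have h2 : Real.exp c * N < N + 2 := by
    nlinarith [Real.exp_pos c, mul_lt_mul_of_pos_right hkey (Real.exp_pos c)]
  rw [show 1 + 2/N = (N+2)/N by field_simp]
  rw [lt_div_iff₀ hN0]
  linarith

private lemma pointwiseAux (k : ℕ) (T x : ℝ) (hT : (k:ℝ) + 2 = T) (hx0 : 0 ≤ x) :
    Real.exp (-x) * x ^ k ≤ Real.exp (-T) * T ^ k * Real.exp (2*(T-x)/T) := by
  have hT0 : (0:ℝ) < T := by rw [← hT]; positivity
  have hb : x ≤ T * Real.exp (-(T-x)/T) := by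
    have h := Real.add_one_le_exp (-(T-x)/T)
    have h2 := mul_le_mul_of_nonneg_left h hT0.le
    have h3 : T * (-(T-x)/T + 1) = x := by field_simp; ring
    linarith
  have hpow : x ^ k ≤ (T * Real.exp (-(T-x)/T)) ^ k := pow_le_pow_left₀ hx0 hb k
  have hexp : (T * Real.exp (-(T-x)/T)) ^ k = T ^ k * Real.exp ((k:ℝ) * (-(T-x)/T)) := by
    rw [mul_pow, ← Real.exp_nat_mul]
  calc Real.exp (-x) * x ^ k
      ≤ Real.exp (-x) * (T ^ k * Real.exp ((k:ℝ) * (-(T-x)/T))) := by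
        rw [← hexp]
        exact mul_le_mul_of_nonneg_left hpow (Real.exp_pos _).le
    _ = Real.exp (-T) * T ^ k * Real.exp (2*(T-x)/T) := by
        rw [show Real.exp (-x) * (T ^ k * Real.exp ((k:ℝ) * (-(T-x)/T)))
            = T ^ k * (Real.exp (-x) * Real.exp ((k:ℝ) * (-(T-x)/T))) by ring,
          ← Real.exp_add,
          show Real.exp (-T) * T ^ k * Real.exp (2*(T-x)/T)
            = T ^ k * (Real.exp (-T) * Real.exp (2*(T-x)/T)) by ring, ← Real.exp_add]
        congr 1
        have hk : (k:ℝ) = T - 2 := by linarith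
        rw [hk]
        field_simp
        ring

private lemma integralExpAux (T : ℝ) (hT : 0 < T) :
    ∫ x in (T-1)..T, Real.exp (2*(T-x)/T) = (T/2) * (Real.exp (2/T) - 1) := by
  have hderiv : ∀ x ∈ Set.uIcc (T-1) T,
      HasDerivAt (fun y : ℝ => -(T/2) * Real.exp (2*(T-y)/T)) (Real.exp (2*(T-x)/T)) x := by
    intro x _
    have h0 : HasDerivAt (fun y : ℝ => T - y) (-1) x := by
      simpa using (hasDerivAt_id x).const_sub T
    have h1 : HasDerivAt (fun y : ℝ => 2*(T-y)/T) (-2/T) x := by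
      have h2 := (h0.const_mul (2:ℝ)).div_const T
      refine h2.congr_deriv ?_
      ring
    have h3 := (h1.exp).const_mul (-(T/2))
    refine h3.congr_deriv ?_
    field_simp
  have hint : IntervalIntegrable (fun x : ℝ => Real.exp (2*(T-x)/T)) volume (T-1) T :=
    Continuous.intervalIntegrable (by continuity) _ _
  have key := intervalIntegral.integral_eq_sub_of_hasDerivAt hderiv hint
  rw [key, show 2*(T-T)/T = 0 by ring, show 2*(T-(T-1))/T = 2/T by ring, Real.exp_zero]
  ring

private lemma stepAux (m : ℕ) :
    (∫ x in (0:ℝ)..((m+2:ℕ) : ℝ), Real.exp (-x) * x ^ ((m+2) - 1) / Real.Gamma ((m+2:ℕ)))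
      < ∫ x in (0:ℝ)..((m+1:ℕ) : ℝ), Real.exp (-x) * x ^ ((m+1) - 1) / Real.Gamma ((m+1:ℕ)) := by
  have hs2 : m + 2 - 1 = m + 1 := rfl
  have hs1 : m + 1 - 1 = m := rfl
  set N : ℝ := (m:ℝ) + 1 with hN
  have hN1 : (1:ℝ) ≤ N := by rw [hN]; have : (0:ℝ) ≤ (m:ℝ) := Nat.cast_nonneg m; linarith
  have hN0 : (0:ℝ) < N := by linarith
  have hcast2 : ((m+2:ℕ):ℝ) = N + 1 := by rw [hN]; push_cast; ring
  have hcast1 : ((m+1:ℕ):ℝ) = N := by rw [hN]; norm_cast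
  have hGamma2 : Real.Gamma (N + 1) = ((m+1).factorial : ℝ) := by
    rw [show N + 1 = ((m+1:ℕ):ℝ) + 1 by rw [hcast1]]
    exact Real.Gamma_nat_eq_factorial (m+1)
  have hGamma1 : Real.Gamma N = (m.factorial : ℝ) := by
    rw [hN]
    exact Real.Gamma_nat_eq_factorial m
  simp only [hs2, hs1, hcast2, hcast1, intervalIntegral.integral_div]
  rw [hGamma2, hGamma1]
  set A := ∫ x in (0:ℝ)..N, Real.exp (-x) * x ^ m with hA
  set B := ∫ x in N..(N+1), Real.exp (-x) * x ^ m with hB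
  have hAB : ∫ x in (0:ℝ)..(N+1), Real.exp (-x) * x ^ m = A + B :=
    (intervalIntegral.integral_add_adjacent_intervals (intbleAux m 0 N) (intbleAux m N (N+1))).symm
  have hibp := ibp m (N+1)
  rw [hAB] at hibp
  set E := Real.exp (-(N+1)) * (N+1) ^ (m+1) with hE
  have hBbound : B ≤ Real.exp (-(N+1)) * (N+1)^m * ((N+1)/2 * (Real.exp (2/(N+1)) - 1)) := by
    have hmono : B ≤ ∫ x in N..(N+1),
        Real.exp (-(N+1)) * (N+1)^m * Real.exp (2*((N+1)-x)/(N+1)) := by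
      apply intervalIntegral.integral_mono_on (by linarith) (intbleAux m N (N+1))
        (Continuous.intervalIntegrable (by continuity) _ _)
      intro x hx
      exact pointwiseAux m (N+1) x (by rw [hN]; push_cast; ring)
        (le_trans (by linarith) hx.1)
    rw [intervalIntegral.integral_const_mul] at hmono
    have hie := integralExpAux (N+1) (by linarith)
    rw [show N+1-1 = N by ring] at hie
    rw [hie] at hmono
    exact hmono
  have hexp := expLt N hN1
  have hfac : (0:ℝ) < Real.exp (-(N+1)) * (N+1)^m := by positivity
  have h1 : (N+1)/2 * (Real.exp (2/(N+1)) - 1) < (N+1)/N := by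
    have h2 : Real.exp (2/(N+1)) - 1 < 2/N := by linarith
    have h3 : (0:ℝ) < (N+1)/2 := by linarith
    calc (N+1)/2 * (Real.exp (2/(N+1)) - 1) < (N+1)/2 * (2/N) :=
          mul_lt_mul_of_pos_left h2 h3
      _ = (N+1)/N := by field_simp
  have hBE : B * N < E := by
    have h4 : B < Real.exp (-(N+1)) * (N+1)^m * ((N+1)/N) :=
      lt_of_le_of_lt hBbound (mul_lt_mul_of_pos_left h1 hfac)
    have h5 : Real.exp (-(N+1)) * (N+1)^m * ((N+1)/N) * N = E := by
      rw [hE]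
      field_simp
      ring
    calc B * N < Real.exp (-(N+1)) * (N+1)^m * ((N+1)/N) * N :=
          mul_lt_mul_of_pos_right h4 hN0
      _ = E := h5
  rw [hibp]
  have hfm : (0:ℝ) < (m.factorial : ℝ) := by exact_mod_cast Nat.factorial_pos m
  have hfm1 : ((m+1).factorial : ℝ) = ((m:ℝ)+1) * (m.factorial : ℝ) := by
    rw [Nat.factorial_succ]; push_cast; ring
  rw [hfm1, div_lt_div_iff₀ (by positivity) hfm]
  have hBE' : B * ((m:ℝ) + 1) < E := hBE
  nlinarith [hBE', hfm]

/-- For R_m ~ Gamma(m,1) (density `e^{-x} x^{m-1}/Γ(m)` on (0,∞)),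
P(R_m ≤ m) is strictly decreasing in the positive integer m. -/
theorem gamma_cdf_at_mean_strict_anti
    (m₁ m₂ : ℕ) (hm₁ : 0 < m₁) (h : m₁ < m₂) :
    (∫ x in (0:ℝ)..(m₂ : ℝ), Real.exp (-x) * x ^ (m₂ - 1) / Real.Gamma m₂)
      < ∫ x in (0:ℝ)..(m₁ : ℝ), Real.exp (-x) * x ^ (m₁ - 1) / Real.Gamma m₁ := by
  induction m₂ with
  | zero => omega
  | succ c ih =>
    rcases Nat.lt_succ_iff_lt_or_eq.mp h with hlt | heq
    · refine lt_trans ?_ (ih hlt)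
      obtain ⟨k, rfl⟩ : ∃ k, c = k + 1 := ⟨c - 1, by omega⟩
      exact stepAux k
    · subst heq
      obtain ⟨k, rfl⟩ : ∃ k, m₁ = k + 1 := ⟨m₁ - 1, by omega⟩
      exact stepAux k
end

section
/- Let f be a continuously differentiable probability density on ℝ with bounded derivative, positive for sufficiently small x, and unimodal with mode a (f' ≥ 0 on (-∞,a), f' ≤ 0 on (a,∞)). Let Y be standard exponential independent of X ~ f, and let f_λ be the density of X + λY for λ > 0. Then f_λ is unimodal, and any critical point of f_λ is a mode of f_λ. -/
open MeasureTheory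

open Set intervalIntegral

section Aux

variable {lam : ℝ}

private lemma cov_iio (x : ℝ) (g : ℝ → ℝ) :
    ∫ u in Set.Iio x, g u = ∫ z in Set.Ioi (0:ℝ), g (x - z) := by
  have hmp : MeasurePreserving (fun z : ℝ => x - z) volume volume :=
    Measure.measurePreserving_sub_left volume x
  have hemb : MeasurableEmbedding (fun z : ℝ => x - z) :=
    (MeasurableEquiv.subLeft x).measurableEmbedding
  have hpre : (fun z : ℝ => x - z) ⁻¹' Set.Iio x = Set.Ioi 0 := by
    ext z; simp [sub_lt_iff_lt_add]
  calc ∫ u in Set.Iio x, g u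
      = ∫ u in Set.Iio x, g u ∂(Measure.map (fun z : ℝ => x - z) volume) := by
        rw [hmp.map_eq]
    _ = ∫ z in (fun z : ℝ => x - z) ⁻¹' Set.Iio x, g (x - z) := hemb.setIntegral_map g _
    _ = ∫ z in Set.Ioi (0:ℝ), g (x - z) := by rw [hpre]

private lemma cov_iio_int (x : ℝ) (g : ℝ → ℝ) (h : IntegrableOn g (Set.Iio x)) :
    IntegrableOn (fun z => g (x - z)) (Set.Ioi (0:ℝ)) := by
  have hmp : MeasurePreserving (fun z : ℝ => x - z) volume volume :=
    Measure.measurePreserving_sub_left volume x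
  have hemb : MeasurableEmbedding (fun z : ℝ => x - z) :=
    (MeasurableEquiv.subLeft x).measurableEmbedding
  have hpre : (fun z : ℝ => x - z) ⁻¹' Set.Iio x = Set.Ioi 0 := by
    ext z; simp [sub_lt_iff_lt_add]
  have := (hemb.integrableOn_map_iff (f := g) (μ := volume) (s := Set.Iio x)).mp
  rw [hmp.map_eq] at this
  have h2 := this h
  rw [hpre] at h2
  exact h2

private lemma ftc_iio (F : ℝ → ℝ) (hFc : Continuous F) (hFi : ∀ y : ℝ, IntegrableOn F (Iic y))
    (x : ℝ) : HasDerivAt (fun y => ∫ u in Iio y, F u) (F x) x := by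
  have hIio : ∀ y : ℝ, (∫ u in Iio y, F u) = ∫ u in Iic y, F u := fun y =>
    setIntegral_congr_set Iio_ae_eq_Iic
  have heq : ∀ y : ℝ, (∫ u in Iio y, F u) = (∫ u in Iio x, F u) + ∫ t in x..y, F t := by
    intro y
    rw [hIio, hIio, ← integral_Iic_sub_Iic (hFi x) (hFi y)]
    ring
  have hD : HasDerivAt (fun y => (∫ u in Iio x, F u) + ∫ t in x..y, F t) (F x) x := by
    have h1 : HasDerivAt (fun y => ∫ t in x..y, F t) (F x) x :=
      integral_hasDerivAt_right ((hFi x).mono_set (by simp [Set.uIcc_of_le])).intervalIntegrable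
        (hFc.stronglyMeasurableAtFilter volume _) hFc.continuousAt
    simpa using h1.const_add (∫ u in Iio x, F u)
  exact hD.congr_of_eventuallyEq (Filter.Eventually.of_forall fun y => (heq y))

private lemma exp_int (hlam : 0 < lam) (c : ℝ) :
    IntegrableOn (fun z : ℝ => Real.exp (-z / lam)) (Ioi c) := by
  have := exp_neg_integrableOn_Ioi c (b := 1/lam) (by positivity)
  refine this.congr_fun (fun z _ => ?_) measurableSet_Ioi
  rw [neg_div]
  ring_nf

private lemma exp_integral (hlam : 0 < lam) :
    ∫ z in Ioi (0:ℝ), Real.exp (-z / lam) = lam := by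
  have hint : IntegrableOn (fun z : ℝ => Real.exp (-z / lam)) (Ioi 0) := exp_int hlam 0
  have hderiv : ∀ z ∈ Ioi (0:ℝ),
      HasDerivAt (fun z => -lam * Real.exp (-z / lam)) (Real.exp (-z / lam)) z := by
    intro z _
    have h1 : HasDerivAt (fun z : ℝ => -z / lam) (-1 / lam) z := by
      simpa using ((hasDerivAt_id z).neg.div_const lam)
    have := (h1.exp).const_mul (-lam)
    refine this.congr_deriv ?_
    have hk : -lam * (-1 / lam) = 1 := by
      rw [neg_div, mul_neg, neg_mul, neg_neg, mul_one_div_cancel hlam.ne']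
    linear_combination (Real.exp (-z / lam)) * hk
  have htend : Filter.Tendsto (fun z => -lam * Real.exp (-z / lam)) Filter.atTop (nhds 0) := by
    have h1 : Filter.Tendsto (fun z : ℝ => -z / lam) Filter.atTop Filter.atBot := by
      apply Filter.Tendsto.atBot_div_const hlam
      exact Filter.tendsto_neg_atBot_iff.mpr Filter.tendsto_id
    have := (Real.tendsto_exp_atBot.comp h1).const_mul (-lam)
    simpa using this
  have := integral_Ioi_of_hasDerivAt_of_tendsto
    ((Continuous.continuousWithinAt (by continuity))) hderiv hint htend
  rw [this]; simp

end Aux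


/-- Let f be a continuously differentiable probability density with bounded derivative,
positive for sufficiently small x, and unimodal with mode a.  Let f_λ be the density of
X + λY where X ~ f and Y ~ Exp(1), λ > 0, i.e.
f_λ(x) = ∫₀^∞ f(x-z) (1/λ) e^{-z/λ} dz.  Then f_λ is unimodal, and any critical point
of f_λ is a mode (global maximizer) of f_λ. -/
theorem exp_convolution_unimodal
    (f : ℝ → ℝ)
    (hdens_nonneg : ∀ x, 0 ≤ f x)
    (hdens_int : ∫ x, f x = 1)
    (hC1 : ContDiff ℝ 1 f)
    (hbdd : ∃ C, ∀ x, |deriv f x| ≤ C)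
    (hpos : ∃ x₁, ∀ x < x₁, 0 < f x)
    (a : ℝ)
    (hmode : (∀ x < a, 0 ≤ deriv f x) ∧ (∀ x > a, deriv f x ≤ 0))
    (lam : ℝ) (hlam : 0 < lam)
    (flam : ℝ → ℝ)
    (hflam : ∀ x, flam x = ∫ z in Set.Ioi (0:ℝ), f (x - z) * ((1 / lam) * Real.exp (-z / lam))) :
    ((∃ c, MonotoneOn flam (Set.Iic c) ∧ AntitoneOn flam (Set.Ici c)) ∧
      ∀ x₀, deriv flam x₀ = 0 → ∀ x, flam x ≤ flam x₀) := by
  have hf_int : Integrable f := integrable_of_integral_eq_one hdens_int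
  have hf_cont : Continuous f := hC1.continuous
  have hf_diff : Differentiable ℝ f := hC1.differentiable one_ne_zero
  set F : ℝ → ℝ := fun u => f u * Real.exp (u / lam) with hF_def
  have hF_cont : Continuous F := by continuity
  have hF_nonneg : ∀ u, 0 ≤ F u := fun u => mul_nonneg (hdens_nonneg u) (Real.exp_pos _).le
  -- integrability of F on half-lines
  have hF_int : ∀ x : ℝ, IntegrableOn F (Iic x) := by
    intro x
    refine Integrable.mono ((hf_int.restrict (s := Iic x)).mul_const (Real.exp (x / lam)))
      (hF_cont.aestronglyMeasurable.restrict) ?_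
    filter_upwards [ae_restrict_mem measurableSet_Iic] with u hu
    have hux : u ≤ x := hu
    rw [Real.norm_eq_abs, Real.norm_eq_abs, abs_of_nonneg (hF_nonneg u),
      abs_of_nonneg (mul_nonneg (hdens_nonneg u) (Real.exp_pos _).le)]
    exact mul_le_mul_of_nonneg_left (Real.exp_le_exp.mpr (by gcongr)) (hdens_nonneg u)
  have hF_intIio : ∀ x : ℝ, IntegrableOn F (Iio x) := fun x =>
    (hF_int x).mono_set Iio_subset_Iic_self
  set G : ℝ → ℝ := fun x => ∫ u in Iio x, F u with hG_def
  have hG_deriv : ∀ x, HasDerivAt G (F x) x := ftc_iio F hF_cont hF_int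
  -- flam in terms of G
  have hker : ∀ x z : ℝ, f (x - z) * ((1 / lam) * Real.exp (-z / lam))
      = (1 / lam) * Real.exp (-x / lam) * F (x - z) := by
    intro x z
    have h2 : Real.exp (-x / lam) * Real.exp ((x - z) / lam) = Real.exp (-z / lam) := by
      rw [← Real.exp_add]
      congr 1
      ring
    calc f (x - z) * ((1 / lam) * Real.exp (-z / lam))
        = f (x - z) * ((1 / lam) * (Real.exp (-x / lam) * Real.exp ((x - z) / lam))) := by
          rw [h2]
      _ = (1 / lam) * Real.exp (-x / lam) * F (x - z) := by rw [hF_def]; ring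
  have hflam_eq : ∀ x, flam x = (1 / lam) * Real.exp (-x / lam) * G x := by
    intro x
    rw [hflam x]
    simp_rw [hker x]
    rw [MeasureTheory.integral_const_mul, hG_def, ← cov_iio x F]
  -- positivity of flam
  obtain ⟨x₁, hx₁⟩ := hpos
  have hG_pos : ∀ x, 0 < G x := by
    intro x
    set b := min x x₁ with hb
    have hsub : Ioo (b - 1) b ⊆ Iio x := fun u hu => lt_of_lt_of_le hu.2 (min_le_left _ _)
    have hposF : ∀ u ∈ Ioo (b - 1) b, 0 < F u := fun u hu =>
      mul_pos (hx₁ u (lt_of_lt_of_le hu.2 (min_le_right _ _))) (Real.exp_pos _)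
    have hii : IntervalIntegrable F volume (b - 1) b :=
      ((hF_int b).mono_set (by
        rw [Set.uIcc_of_le (by linarith)]
        exact Icc_subset_Iic_self)).intervalIntegrable
    have h1 : 0 < ∫ t in (b - 1)..b, F t :=
      intervalIntegral_pos_of_pos_on hii hposF (by linarith)
    have h2 : (∫ t in (b - 1)..b, F t) = ∫ u in Ioo (b - 1) b, F u := by
      rw [intervalIntegral.integral_of_le (by linarith : b - 1 ≤ b)]
      exact (setIntegral_congr_set Ioo_ae_eq_Ioc).symm
    have h3 : (∫ u in Ioo (b - 1) b, F u) ≤ G x := by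
      apply setIntegral_mono_set (hF_intIio x)
      · filter_upwards with u using hF_nonneg u
      · exact HasSubset.Subset.eventuallyLE hsub
    rw [h2] at h1
    exact lt_of_lt_of_le h1 h3
  have hflam_pos : ∀ x, 0 < flam x := by
    intro x
    rw [hflam_eq x]
    exact mul_pos (mul_pos (one_div_pos.mpr hlam) (Real.exp_pos _)) (hG_pos x)
  -- derivative of flam
  have hflam_deriv : ∀ x, HasDerivAt flam ((f x - flam x) / lam) x := by
    intro x
    have hE : HasDerivAt (fun y : ℝ => (1 / lam) * Real.exp (-y / lam))
        (-(1 / lam ^ 2) * Real.exp (-x / lam)) x := by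
      have h1 : HasDerivAt (fun y : ℝ => -y / lam) (-1 / lam) x := by
        simpa using ((hasDerivAt_id x).neg.div_const lam)
      have := h1.exp.const_mul (1 / lam)
      refine this.congr_deriv ?_
      ring
    have hprod := hE.mul (hG_deriv x)
    have hfun : ((fun y => (1 / lam) * Real.exp (-y / lam)) * G) = flam := by
      funext y
      rw [hflam_eq y]
      rfl
    rw [hfun] at hprod
    refine hprod.congr_deriv ?_
    have h2 : Real.exp (-x / lam) * Real.exp (x / lam) = 1 := by
      have h3 : -x / lam + x / lam = 0 := by ring
      rw [← Real.exp_add, h3, Real.exp_zero]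
    rw [hflam_eq x]
    simp only [hF_def]
    linear_combination (f x / lam) * h2
  have hflam_deriv' : ∀ x, deriv flam x = (f x - flam x) / lam := fun x => (hflam_deriv x).deriv
  have hflam_diff : Differentiable ℝ flam := fun x => (hflam_deriv x).differentiableAt
  have hflam_cont : Continuous flam := hflam_diff.continuous
  -- f is monotone up to a
  have hf_mono : MonotoneOn f (Iic a) := by
    apply monotoneOn_of_deriv_nonneg (convex_Iic a) hf_cont.continuousOn
      hf_diff.differentiableOn
    intro x hx
    rw [interior_Iic] at hx
    exact hmode.1 x hx
  -- flam ≤ f on Iic a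
  have hD : ∀ x ≤ a, flam x ≤ f x := by
    intro x hxa
    have hwpos : ∀ z : ℝ, 0 ≤ (1 / lam) * Real.exp (-z / lam) := fun z =>
      mul_nonneg (one_div_pos.mpr hlam).le (Real.exp_pos _).le
    have hfz_int : IntegrableOn
        (fun z : ℝ => f (x - z) * ((1 / lam) * Real.exp (-z / lam))) (Ioi 0) := by
      have h0 : IntegrableOn (fun z => F (x - z)) (Ioi 0) := cov_iio_int x F (hF_intIio x)
      have h1 : IntegrableOn (fun z => (1 / lam) * Real.exp (-x / lam) * F (x - z)) (Ioi 0) :=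
        h0.const_mul ((1 / lam) * Real.exp (-x / lam))
      exact h1.congr_fun (fun z _ => (hker x z).symm) measurableSet_Ioi
    have hw_int : IntegrableOn (fun z : ℝ => f x * ((1 / lam) * Real.exp (-z / lam))) (Ioi 0) := by
      have h1 : IntegrableOn (fun z : ℝ => f x * (1 / lam) * Real.exp (-z / lam)) (Ioi 0) :=
        (exp_int hlam 0).const_mul (f x * (1 / lam))
      exact h1.congr_fun (fun z _ => by ring) measurableSet_Ioi
    rw [hflam x]
    calc (∫ z in Ioi (0:ℝ), f (x - z) * ((1 / lam) * Real.exp (-z / lam)))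
        ≤ ∫ z in Ioi (0:ℝ), f x * ((1 / lam) * Real.exp (-z / lam)) := by
          apply setIntegral_mono_on hfz_int hw_int measurableSet_Ioi
          intro z hz
          have hz0 : (0:ℝ) < z := hz
          exact mul_le_mul_of_nonneg_right
            (hf_mono (show x - z ∈ Iic a by simp only [mem_Iic]; linarith)
              (mem_Iic.mpr hxa) (by linarith)) (hwpos z)
      _ = f x := by
          simp_rw [← mul_assoc]
          rw [MeasureTheory.integral_const_mul, exp_integral hlam]
          field_simp
  -- the auxiliary function φ
  set φfn : ℝ → ℝ := fun x => Real.exp (x / lam) * (flam x - f x) with hφ_def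
  have hφ_deriv : ∀ x, HasDerivAt φfn (-(Real.exp (x / lam)) * deriv f x) x := by
    intro x
    have h0 : HasDerivAt (fun y : ℝ => y / lam) (1 / lam) x := by
      simpa using (hasDerivAt_id x).div_const lam
    have h1 : HasDerivAt (fun y : ℝ => Real.exp (y / lam))
        (Real.exp (x / lam) * (1 / lam)) x := h0.exp
    have h2 : HasDerivAt (fun y => flam y - f y) ((f x - flam x) / lam - deriv f x) x :=
      (hflam_deriv x).sub (hf_diff x).hasDerivAt
    have h3 := h1.mul h2
    refine h3.congr_deriv ?_
    ring
  have hφ_diff : Differentiable ℝ φfn := fun x => (hφ_deriv x).differentiableAt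
  have hφ_cont : Continuous φfn := hφ_diff.continuous
  have hφ_derivEq : ∀ x, deriv φfn x = -(Real.exp (x / lam)) * deriv f x := fun x =>
    (hφ_deriv x).deriv
  have hφ_mono : MonotoneOn φfn (Ici a) := by
    apply monotoneOn_of_deriv_nonneg (convex_Ici a) hφ_cont.continuousOn
      hφ_diff.differentiableOn
    intro x hx
    rw [interior_Ici] at hx
    rw [hφ_derivEq]
    have := hmode.2 x hx
    nlinarith [Real.exp_pos (x / lam)]
  have hφ_anti : AntitoneOn φfn (Iic a) := by
    apply antitoneOn_of_deriv_nonpos (convex_Iic a) hφ_cont.continuousOn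
      hφ_diff.differentiableOn
    intro x hx
    rw [interior_Iic] at hx
    rw [hφ_derivEq]
    have := hmode.1 x hx
    nlinarith [Real.exp_pos (x / lam)]
  -- the set where flam has caught up with f to the right of a
  set S : Set ℝ := {x | a ≤ x ∧ 0 ≤ flam x - f x} with hS_def
  have hS_closed : IsClosed S :=
    isClosed_Ici.inter (isClosed_le continuous_const (hflam_cont.sub hf_cont))
  have hS_bdd : BddBelow S := ⟨a, fun x hx => hx.1⟩
  have hS_ne : S.Nonempty := by
    by_contra hne
    have hlt : ∀ x, a ≤ x → flam x - f x < 0 := by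
      intro x hx
      by_contra h'
      push_neg at h'
      exact hne ⟨x, hx, h'⟩
    have hmono : MonotoneOn flam (Ici a) := by
      apply monotoneOn_of_deriv_nonneg (convex_Ici a) hflam_cont.continuousOn
        hflam_diff.differentiableOn
      intro x hx
      rw [interior_Ici] at hx
      rw [hflam_deriv']
      have := hlt x hx.le
      exact div_nonneg (by linarith) hlam.le
    have hbound : ∀ x, a ≤ x → flam a ≤ f x := fun x hx =>
      le_trans (hmono self_mem_Ici (mem_Ici.mpr hx) hx) (by linarith [hlt x hx])
    have hconst : Integrable (fun _ : ℝ => flam a) (volume.restrict (Ici a)) := by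
      apply Integrable.mono' (hf_int.restrict (s := Ici a)) aestronglyMeasurable_const
      filter_upwards [ae_restrict_mem measurableSet_Ici] with x hx
      rw [Real.norm_eq_abs, abs_of_nonneg (hflam_pos a).le]
      exact hbound x hx
    rw [integrable_const_iff] at hconst
    rcases hconst with h | h
    · exact absurd h (ne_of_gt (hflam_pos a))
    · have h' := h.measure_univ_lt_top
      rw [Measure.restrict_apply_univ, Real.volume_Ici] at h'
      exact absurd h' (by simp)
  set c := sInf S with hc_def
  have hc_mem : c ∈ S := hS_closed.csInf_mem hS_ne hS_bdd
  have hac : a ≤ c := hc_mem.1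
  have hhc : 0 ≤ flam c - f c := hc_mem.2
  have sign3 : ∀ x, c ≤ x → 0 ≤ flam x - f x := by
    intro x hcx
    have h1 : φfn c ≤ φfn x := hφ_mono (mem_Ici.mpr hac) (mem_Ici.mpr (hac.trans hcx)) hcx
    have h2 : 0 ≤ φfn c := by
      simp only [hφ_def]
      exact mul_nonneg (Real.exp_pos _).le hhc
    have h3 : 0 ≤ φfn x := le_trans h2 h1
    simp only [hφ_def] at h3
    nlinarith [Real.exp_pos (x / lam)]
  have hmono : MonotoneOn flam (Iic c) := by
    apply monotoneOn_of_deriv_nonneg (convex_Iic c) hflam_cont.continuousOn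
      hflam_diff.differentiableOn
    intro x hx
    rw [interior_Iic] at hx
    rw [hflam_deriv']
    rcases le_or_gt x a with h | h
    · have := hD x h
      exact div_nonneg (by linarith) hlam.le
    · have hxS : x ∉ S := notMem_of_lt_csInf hx hS_bdd
      have h4 : ¬ (0 ≤ flam x - f x) := fun hge => hxS ⟨h.le, hge⟩
      push_neg at h4
      exact div_nonneg (by linarith) hlam.le
  have hanti : AntitoneOn flam (Ici c) := by
    apply antitoneOn_of_deriv_nonpos (convex_Ici c) hflam_cont.continuousOn
      hflam_diff.differentiableOn
    intro x hx
    rw [interior_Ici] at hx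
    rw [hflam_deriv']
    have := sign3 x hx.le
    exact div_nonpos_of_nonpos_of_nonneg (by linarith) hlam.le
  have hmax : ∀ x, flam x ≤ flam c := by
    intro x
    rcases le_total x c with h | h
    · exact hmono (mem_Iic.mpr h) (mem_Iic.mpr le_rfl) h
    · exact hanti (mem_Ici.mpr le_rfl) (mem_Ici.mpr h) h
  refine ⟨⟨c, hmono, hanti⟩, ?_⟩
  intro x₀ h0
  have hx0 : flam x₀ = f x₀ := by
    rw [hflam_deriv'] at h0
    rcases div_eq_zero_iff.mp h0 with h | h
    · linarith
    · exact absurd h (ne_of_gt hlam)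
  have hφx₀ : φfn x₀ = 0 := by
    simp only [hφ_def]
    rw [hx0]
    ring
  rcases lt_or_ge x₀ a with hxa | hax
  · -- x₀ < a : impossible since f would be a positive constant near -∞
    exfalso
    have hzero : ∀ x ≤ x₀, flam x = f x := by
      intro x hx
      have h1 : φfn x₀ ≤ φfn x :=
        hφ_anti (mem_Iic.mpr (hx.trans hxa.le)) (mem_Iic.mpr hxa.le) hx
      rw [hφx₀] at h1
      simp only [hφ_def] at h1
      have h3 : flam x ≤ f x := hD x (by linarith)
      nlinarith [Real.exp_pos (x / lam)]
    have hderiv0 : ∀ x ∈ interior (Iic x₀), deriv flam x = 0 := by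
      intro x hx
      rw [interior_Iic] at hx
      rw [hflam_deriv', hzero x hx.le]
      simp
    have hm : MonotoneOn flam (Iic x₀) :=
      monotoneOn_of_deriv_nonneg (convex_Iic x₀) hflam_cont.continuousOn
        hflam_diff.differentiableOn (fun x hx => (hderiv0 x hx).ge)
    have ha' : AntitoneOn flam (Iic x₀) :=
      antitoneOn_of_deriv_nonpos (convex_Iic x₀) hflam_cont.continuousOn
        hflam_diff.differentiableOn (fun x hx => (hderiv0 x hx).le)
    have hconstval : ∀ x ≤ x₀, flam x = flam x₀ := fun x hx =>
      le_antisymm (hm (mem_Iic.mpr hx) (mem_Iic.mpr le_rfl) hx)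
        (ha' (mem_Iic.mpr hx) (mem_Iic.mpr le_rfl) hx)
    have hconst : Integrable (fun _ : ℝ => flam x₀) (volume.restrict (Iic x₀)) := by
      apply (hf_int.restrict (s := Iic x₀)).congr
      filter_upwards [ae_restrict_mem measurableSet_Iic] with x hx
      rw [← hzero x hx, hconstval x hx]
    rw [integrable_const_iff] at hconst
    rcases hconst with h | h
    · exact absurd h (ne_of_gt (hflam_pos x₀))
    · have h' := h.measure_univ_lt_top
      rw [Measure.restrict_apply_univ, Real.volume_Iic] at h'
      exact absurd h' (by simp)
  · -- a ≤ x₀ : then c ≤ x₀ and flam is constant on [c, x₀]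
    have hcx0 : c ≤ x₀ := csInf_le hS_bdd ⟨hax, by rw [hx0]; simp⟩
    have hzero2 : ∀ x, c ≤ x → x ≤ x₀ → flam x = f x := by
      intro x h1 h2
      have ha1 : φfn x ≤ φfn x₀ :=
        hφ_mono (mem_Ici.mpr (hac.trans h1)) (mem_Ici.mpr (hac.trans hcx0)) h2
      rw [hφx₀] at ha1
      simp only [hφ_def] at ha1
      have ha3 := sign3 x h1
      nlinarith [Real.exp_pos (x / lam)]
    have hderiv0 : ∀ x ∈ interior (Icc c x₀), deriv flam x = 0 := by
      intro x hx
      rw [interior_Icc] at hx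
      rw [hflam_deriv', hzero2 x hx.1.le hx.2.le]
      simp
    have hm : MonotoneOn flam (Icc c x₀) :=
      monotoneOn_of_deriv_nonneg (convex_Icc c x₀) hflam_cont.continuousOn
        hflam_diff.differentiableOn (fun x hx => (hderiv0 x hx).ge)
    have ha' : AntitoneOn flam (Icc c x₀) :=
      antitoneOn_of_deriv_nonpos (convex_Icc c x₀) hflam_cont.continuousOn
        hflam_diff.differentiableOn (fun x hx => (hderiv0 x hx).le)
    have hmemc : c ∈ Icc c x₀ := ⟨le_rfl, hcx0⟩
    have hmemx : x₀ ∈ Icc c x₀ := ⟨hcx0, le_rfl⟩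
    have heq : flam c = flam x₀ :=
      le_antisymm (hm hmemc hmemx hcx0) (ha' hmemc hmemx hcx0)
    intro x
    calc flam x ≤ flam c := hmax x
      _ = flam x₀ := heq
end

section
/- Under the same hypotheses on f (continuously differentiable with bounded derivative, positive for small x, unimodal), if 0 < λ₀ < λ, then every mode of f_λ is strictly larger than every mode of f_{λ₀}, where f_λ is the density of X + λY with Y ~ Exp(1) independent of X ~ f. -/
open MeasureTheory Set Filter

section ecmAux

noncomputable def ecmConv (f : ℝ → ℝ) (μ : ℝ) (x : ℝ) : ℝ :=
  ∫ z in Set.Ioi (0:ℝ), f (x - z) * ((1 / μ) * Real.exp (-z / μ))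

noncomputable def ecmF (f : ℝ → ℝ) (μ : ℝ) (x : ℝ) : ℝ :=
  ∫ u in Set.Iic x, f u * Real.exp (u / μ)

variable {f : ℝ → ℝ} {μ : ℝ}

lemma ecm_F_integrableOn (hc : Continuous f) (hi : Integrable f) (hμ : 0 < μ) (x : ℝ) :
    IntegrableOn (fun u => f u * Real.exp (u / μ)) (Set.Iic x) := by
  have hb : IntegrableOn (fun u => Real.exp (x / μ) * ‖f u‖) (Set.Iic x) :=
    (hi.norm.const_mul _).integrableOn
  refine Integrable.mono hb ?_ ?_
  · exact (hc.mul (Real.continuous_exp.comp (continuous_id.div_const μ))).aestronglyMeasurable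
  · refine (ae_restrict_iff' measurableSet_Iic).2 (Filter.Eventually.of_forall fun u hu => ?_)
    have h1 : Real.exp (u / μ) ≤ Real.exp (x / μ) :=
      Real.exp_le_exp.2 ((div_le_div_iff_of_pos_right hμ).2 hu)
    have h2 : (0:ℝ) ≤ ‖f u‖ := norm_nonneg _
    calc ‖f u * Real.exp (u / μ)‖ = ‖f u‖ * Real.exp (u / μ) := by
          rw [norm_mul, Real.norm_eq_abs (Real.exp _), abs_of_pos (Real.exp_pos _)]
      _ ≤ ‖f u‖ * Real.exp (x / μ) := by nlinarith
      _ ≤ ‖Real.exp (x / μ) * ‖f u‖‖ := by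
          rw [mul_comm]; exact le_abs_self _

lemma ecm_repr (hc : Continuous f) (hi : Integrable f) (hμ : 0 < μ) (x : ℝ) :
    ecmConv f μ x = Real.exp (-x / μ) / μ * ecmF f μ x := by
  set Ψ : ℝ → ℝ := (Set.Iio x).indicator (fun u => f u * ((1 / μ) * Real.exp ((u - x) / μ))) with hΨ
  have key : ∀ z : ℝ,
      (Set.Ioi (0:ℝ)).indicator (fun z => f (x - z) * ((1 / μ) * Real.exp (-z / μ))) z
        = Ψ (x - z) := by
    intro z
    by_cases hz : (0:ℝ) < z
    · rw [Set.indicator_of_mem (show z ∈ Set.Ioi (0:ℝ) from hz), hΨ,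
        Set.indicator_of_mem (show x - z ∈ Set.Iio x by simpa using hz)]
      have : x - z - x = -z := by ring
      rw [this]
    · rw [Set.indicator_of_notMem (show z ∉ Set.Ioi (0:ℝ) from hz), hΨ,
        Set.indicator_of_notMem (show x - z ∉ Set.Iio x by simpa using hz)]
  have step1 : ecmConv f μ x = ∫ z, Ψ (x - z) := by
    rw [ecmConv, ← integral_indicator measurableSet_Ioi]
    exact integral_congr_ae (Filter.Eventually.of_forall key)
  have step2 : ∫ z, Ψ (x - z) = ∫ u, Ψ u := by
    have h1 : ∫ z, Ψ (x - z) = ∫ z, Ψ (x + z) := by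
      simp_rw [sub_eq_add_neg]
      exact integral_neg_eq_self (fun z => Ψ (x + z)) volume
    rw [h1, integral_add_left_eq_self Ψ x]
  have step3 : ∫ u, Ψ u = ∫ u in Set.Iic x, f u * ((1 / μ) * Real.exp ((u - x) / μ)) := by
    rw [hΨ, integral_indicator measurableSet_Iio, ← integral_Iic_eq_integral_Iio]
  rw [step1, step2, step3, ecmF, ← integral_const_mul]
  refine setIntegral_congr_fun measurableSet_Iic fun u _ => ?_
  have : (u - x) / μ = -x / μ + u / μ := by ring
  rw [this, Real.exp_add]
  ring

lemma ecm_integrableOn (hc : Continuous f) (hi : Integrable f) (hμ : 0 < μ) (x : ℝ) :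
    IntegrableOn (fun z => f (x - z) * ((1 / μ) * Real.exp (-z / μ))) (Set.Ioi 0) := by
  have h1 : Integrable (fun z => f (x - z)) := hi.comp_sub_left x
  have hb : IntegrableOn (fun z => (1 / μ) * ‖f (x - z)‖) (Set.Ioi 0) :=
    (h1.norm.const_mul _).integrableOn
  refine Integrable.mono hb ?_ ?_
  · exact ((hc.comp (continuous_const.sub continuous_id)).mul
      (continuous_const.mul (Real.continuous_exp.comp (continuous_id.neg.div_const μ)))).aestronglyMeasurable
  · refine (ae_restrict_iff' measurableSet_Ioi).2 (Filter.Eventually.of_forall fun z hz => ?_)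
    have hz' : (0:ℝ) < z := hz
    have he : Real.exp (-z / μ) ≤ 1 := by
      rw [Real.exp_le_one_iff, neg_div, neg_nonpos]
      positivity
    have hμ' : (0:ℝ) < 1 / μ := by positivity
    calc ‖f (x - z) * ((1 / μ) * Real.exp (-z / μ))‖
        = ‖f (x - z)‖ * ((1 / μ) * Real.exp (-z / μ)) := by
          rw [norm_mul, Real.norm_eq_abs (_ * _), abs_of_pos (by positivity)]
      _ ≤ ‖f (x - z)‖ * ((1 / μ) * 1) := by
          gcongr
      _ ≤ ‖(1 / μ) * ‖f (x - z)‖‖ := by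
          rw [mul_one, mul_comm]; exact le_abs_self _

lemma ecm_F_nonneg (h0 : ∀ x, 0 ≤ f x) (x : ℝ) : 0 ≤ ecmF f μ x :=
  setIntegral_nonneg measurableSet_Iic fun u _ => mul_nonneg (h0 u) (Real.exp_pos _).le

lemma ecm_F_le (h0 : ∀ x, 0 ≤ f x) (hc : Continuous f) (hi : Integrable f)
    (hone : ∫ x, f x = 1) (hμ : 0 < μ) (x : ℝ) : ecmF f μ x ≤ Real.exp (x / μ) := by
  have h1 : ecmF f μ x ≤ ∫ u in Set.Iic x, Real.exp (x / μ) * f u := by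
    refine setIntegral_mono_on (ecm_F_integrableOn hc hi hμ x)
      ((hi.const_mul _).integrableOn) measurableSet_Iic fun u hu => ?_
    have : Real.exp (u / μ) ≤ Real.exp (x / μ) :=
      Real.exp_le_exp.2 (div_le_div_of_nonneg_right hu hμ.le)
    rw [mul_comm (Real.exp (x / μ))]
    exact mul_le_mul_of_nonneg_left this (h0 u)
  have h2 : ∫ u in Set.Iic x, Real.exp (x / μ) * f u
      = Real.exp (x / μ) * ∫ u in Set.Iic x, f u := integral_const_mul _ _
  have h3 : ∫ u in Set.Iic x, f u ≤ 1 := by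
    rw [← hone]
    exact setIntegral_le_integral hi (Filter.Eventually.of_forall h0)
  calc ecmF f μ x ≤ Real.exp (x / μ) * ∫ u in Set.Iic x, f u := by rw [← h2]; exact h1
    _ ≤ Real.exp (x / μ) * 1 := by gcongr
    _ = Real.exp (x / μ) := mul_one _

lemma ecm_F_hasDerivAt (hc : Continuous f) (hi : Integrable f) (hμ : 0 < μ) (x : ℝ) :
    HasDerivAt (ecmF f μ) (f x * Real.exp (x / μ)) x := by
  have hcont : Continuous fun u => f u * Real.exp (u / μ) :=
    hc.mul (Real.continuous_exp.comp (continuous_id.div_const μ))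
  have heq : ∀ y, ecmF f μ y = ecmF f μ 0 + ∫ u in (0:ℝ)..y, f u * Real.exp (u / μ) := by
    intro y
    have := intervalIntegral.integral_Iic_sub_Iic
      (ecm_F_integrableOn hc hi hμ 0) (ecm_F_integrableOn hc hi hμ y)
    rw [ecmF, ecmF, ← this]
    ring
  have hd : HasStrictDerivAt (fun y => ∫ u in (0:ℝ)..y, f u * Real.exp (u / μ))
      (f x * Real.exp (x / μ)) x := hcont.integral_hasStrictDerivAt 0 x
  have h2 := (hd.hasDerivAt).const_add (ecmF f μ 0)
  exact h2.congr_of_eventuallyEq (Filter.Eventually.of_forall fun y => heq y)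

lemma ecm_hasDerivAt (hc : Continuous f) (hi : Integrable f) (hμ : 0 < μ) (x : ℝ) :
    HasDerivAt (ecmConv f μ) ((f x - ecmConv f μ x) / μ) x := by
  have hF := ecm_F_hasDerivAt hc hi hμ x
  have h1 : HasDerivAt (fun y => Real.exp (-y / μ) / μ)
      (Real.exp (-x / μ) * (-1 / μ) / μ) x := by
    have hlin : HasDerivAt (fun y : ℝ => -y / μ) (-1 / μ) x := by
      simpa using ((hasDerivAt_id x).neg.div_const μ)
    exact (hlin.exp).div_const μ
  have h2 := h1.mul hF
  have hfun : ecmConv f μ = fun y => Real.exp (-y / μ) / μ * ecmF f μ y :=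
    funext fun y => ecm_repr hc hi hμ y
  rw [hfun]
  refine h2.congr_deriv ?_
  have hexp : Real.exp (-x / μ) * Real.exp (x / μ) = 1 := by
    rw [← Real.exp_add]; ring_nf; exact Real.exp_zero
  have h3 : Real.exp (-x / μ) / μ * (f x * Real.exp (x / μ))
      = f x / μ := by
    rw [show Real.exp (-x / μ) / μ * (f x * Real.exp (x / μ))
        = f x * (Real.exp (-x / μ) * Real.exp (x / μ)) / μ from by ring, hexp, mul_one]
  rw [h3]
  ring

lemma ecm_modeEq (hc : Continuous f) (hi : Integrable f) (hμ : 0 < μ) {m : ℝ}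
    (hmax : ∀ x, ecmConv f μ x ≤ ecmConv f μ m) : f m = ecmConv f μ m := by
  have hd := ecm_hasDerivAt hc hi hμ m
  have hloc : IsLocalMax (ecmConv f μ) m :=
    Filter.Eventually.of_forall fun x => hmax x
  have h0 : deriv (ecmConv f μ) m = 0 := hloc.deriv_eq_zero
  rw [hd.deriv] at h0
  have hμ' : μ ≠ 0 := ne_of_gt hμ
  field_simp at h0
  linarith

lemma ecm_pos (hc : Continuous f) (hi : Integrable f) (h0 : ∀ x, 0 ≤ f x) (hμ : 0 < μ)
    {c : ℝ} (hp : ∀ x < c, 0 < f x) (x : ℝ) : 0 < ecmConv f μ x := by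
  rw [ecmConv, setIntegral_pos_iff_support_of_nonneg_ae]
  · refine lt_of_lt_of_le ?_ (measure_mono (?_ :
      Set.Ioi (max 0 (x - c) + 1) ⊆ _))
    · rw [Real.volume_Ioi]; simp
    · intro z hz
      have hz1 : (0:ℝ) < z := by
        have := le_max_left 0 (x - c); simp only [Set.mem_Ioi] at hz; linarith
      have hz2 : x - z < c := by
        have := le_max_right 0 (x - c); simp only [Set.mem_Ioi] at hz; linarith
      constructor
      · have : 0 < f (x - z) * ((1 / μ) * Real.exp (-z / μ)) := by
          have := hp _ hz2; positivity
        exact Function.mem_support.2 (ne_of_gt this)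
      · exact hz1
  · refine (ae_restrict_iff' measurableSet_Ioi).2 (Filter.Eventually.of_forall fun z _ => ?_)
    have := h0 (x - z); positivity
  · exact ecm_integrableOn hc hi hμ x

lemma ecm_kernel_int (hμ : 0 < μ) : ∫ z in Set.Ioi (0:ℝ), Real.exp (-z / μ) = μ := by
  have h := integral_comp_mul_right_Ioi (fun t => Real.exp (-t)) 0 (show (0:ℝ) < μ⁻¹ by positivity)
  simp only [zero_mul] at h
  have h2 : ∀ z : ℝ, Real.exp (-(z * μ⁻¹)) = Real.exp (-z / μ) := by
    intro z; rw [div_eq_mul_inv, neg_mul]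
  simp only [h2] at h
  rw [h, integral_exp_neg_Ioi]
  simp [abs_of_pos hμ, smul_eq_mul]

lemma ecm_kernel_integrableOn (hμ : 0 < μ) :
    IntegrableOn (fun z => Real.exp (-z / μ)) (Set.Ioi (0:ℝ)) := by
  have h := exp_neg_integrableOn_Ioi 0 (show (0:ℝ) < μ⁻¹ by positivity)
  refine h.congr_fun (fun z _ => ?_) measurableSet_Ioi
  beta_reduce
  rw [div_eq_mul_inv, neg_mul, neg_mul, mul_comm]

/-- the key one-sided lemma: below a mode, the smoothed density lies below f. -/
lemma ecm_below_mode (hc : Continuous f) (hi : Integrable f) (h0 : ∀ x, 0 ≤ f x)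
    {a : ℝ} (hmon : MonotoneOn f (Set.Iic a)) (hanti : AntitoneOn f (Set.Ici a))
    (hμ : 0 < μ) {m : ℝ} (hmax : ∀ x, ecmConv f μ x ≤ ecmConv f μ m) :
    ∀ y ≤ m, ecmConv f μ y ≤ f y := by
  intro y hym
  rcases le_or_gt y a with hya | hya
  · -- monotone case : direct comparison
    rw [ecmConv]
    have hconst : IntegrableOn (fun z => f y * ((1 / μ) * Real.exp (-z / μ)))
        (Set.Ioi (0:ℝ)) := by
      have h := (ecm_kernel_integrableOn hμ).const_mul (f y * (1 / μ))
      refine h.congr (Filter.Eventually.of_forall fun z => ?_)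
      ring
    have step1 : ∫ z in Set.Ioi (0:ℝ), f (y - z) * ((1 / μ) * Real.exp (-z / μ))
        ≤ ∫ z in Set.Ioi (0:ℝ), f y * ((1 / μ) * Real.exp (-z / μ)) := by
      refine setIntegral_mono_on (ecm_integrableOn hc hi hμ y) hconst
        measurableSet_Ioi fun z hz => ?_
      have hz' : (0:ℝ) < z := hz
      have hle : f (y - z) ≤ f y :=
        hmon (show y - z ∈ Set.Iic a by simp only [Set.mem_Iic]; linarith)
          (Set.mem_Iic.2 hya) (by linarith)
      have : (0:ℝ) ≤ (1 / μ) * Real.exp (-z / μ) := by positivity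
      exact mul_le_mul_of_nonneg_right hle this
    have step2 : ∫ z in Set.Ioi (0:ℝ), f y * ((1 / μ) * Real.exp (-z / μ)) = f y := by
      have : ∀ z : ℝ, f y * ((1 / μ) * Real.exp (-z / μ))
          = (f y * (1 / μ)) * Real.exp (-z / μ) := fun z => by ring
      simp_rw [this]
      rw [integral_const_mul, ecm_kernel_int hμ]
      field_simp
    calc _ ≤ _ := step1
      _ = f y := step2
  · -- antitone case: FTC comparison
    by_contra hcon
    push_neg at hcon
    rcases eq_or_lt_of_le hym with rfl | hym'
    · exact absurd (ecm_modeEq hc hi hμ hmax).symm.le (not_le.2 hcon)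
    set G := ecmConv f μ with hG
    have hH : ∀ x : ℝ, HasDerivAt (fun t => Real.exp (t / μ) * G t)
        (Real.exp (x / μ) * f x / μ) x := by
      intro x
      have he : HasDerivAt (fun t : ℝ => Real.exp (t / μ)) (Real.exp (x / μ) * (1 / μ)) x := by
        simpa using ((hasDerivAt_id x).div_const μ).exp
      have h2 := he.mul (ecm_hasDerivAt hc hi hμ x)
      refine h2.congr_deriv ?_
      field_simp
      ring
    have hGcont : Continuous G := by
      rw [continuous_iff_continuousAt]
      exact fun x => (ecm_hasDerivAt hc hi hμ x).differentiableAt.continuousAt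
    have hcont2 : Continuous fun u => Real.exp (u / μ) * f u / μ :=
      ((Real.continuous_exp.comp (continuous_id.div_const μ)).mul hc).div_const μ
    have hftc : Real.exp (m / μ) * G m - Real.exp (y / μ) * G y
        = ∫ u in y..m, Real.exp (u / μ) * f u / μ :=
      (intervalIntegral.integral_eq_sub_of_hasDerivAt (fun u _ => hH u)
        (hcont2.intervalIntegrable y m)).symm
    have hmono : ∫ u in y..m, Real.exp (u / μ) * f u / μ
        ≤ ∫ u in y..m, Real.exp (u / μ) * f y / μ := by
      refine intervalIntegral.integral_mono_on hym'.le (hcont2.intervalIntegrable y m)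
        (((Real.continuous_exp.comp (continuous_id.div_const μ)).mul
          continuous_const).div_const μ |>.intervalIntegrable y m) fun u hu => ?_
      have hfu : f u ≤ f y := hanti (Set.mem_Ici.2 hya.le)
        (Set.mem_Ici.2 (by linarith [hu.1] : a ≤ u)) hu.1
      have he' : (0:ℝ) < Real.exp (u / μ) := Real.exp_pos _
      have : Real.exp (u / μ) * f u ≤ Real.exp (u / μ) * f y :=
        mul_le_mul_of_nonneg_left hfu he'.le
      exact (div_le_div_iff_of_pos_right hμ).2 this
    have hcalc : ∫ u in y..m, Real.exp (u / μ) * f y / μ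
        = f y * (Real.exp (m / μ) - Real.exp (y / μ)) := by
      have hAd : ∀ u : ℝ, HasDerivAt (fun t => f y * Real.exp (t / μ))
          (Real.exp (u / μ) * f y / μ) u := by
        intro u
        have he : HasDerivAt (fun t : ℝ => Real.exp (t / μ)) (Real.exp (u / μ) * (1 / μ)) u := by
          simpa using ((hasDerivAt_id u).div_const μ).exp
        have := he.const_mul (f y)
        refine this.congr_deriv ?_
        field_simp
      rw [intervalIntegral.integral_eq_sub_of_hasDerivAt (fun u _ => hAd u)
        (((Real.continuous_exp.comp (continuous_id.div_const μ)).mul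
          continuous_const).div_const μ |>.intervalIntegrable y m)]
      ring
    have hexpd : (0:ℝ) < Real.exp (m / μ) - Real.exp (y / μ) := by
      have : y / μ < m / μ := (div_lt_div_iff_of_pos_right hμ).2 hym'
      have := Real.exp_lt_exp.2 this
      linarith
    have hstrict : f y * (Real.exp (m / μ) - Real.exp (y / μ))
        < G y * (Real.exp (m / μ) - Real.exp (y / μ)) :=
      mul_lt_mul_of_pos_right hcon hexpd
    have hkey : Real.exp (m / μ) * G m < Real.exp (m / μ) * G y := by
      have h5 : Real.exp (m / μ) * G m
          ≤ Real.exp (y / μ) * G y + f y * (Real.exp (m / μ) - Real.exp (y / μ)) := by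
        rw [hcalc] at hmono
        linarith [hftc, hmono]
      nlinarith [hstrict]
    have : G m < G y := lt_of_mul_lt_mul_left hkey (Real.exp_pos _).le
    exact absurd (hmax y) (not_le.2 this)

lemma ecm_nonneg (h0 : ∀ x, 0 ≤ f x) (hμ : 0 < μ) (x : ℝ) : 0 ≤ ecmConv f μ x :=
  setIntegral_nonneg measurableSet_Ioi fun z _ =>
    mul_nonneg (h0 _) (by positivity)

lemma ecm_le (h0 : ∀ x, 0 ≤ f x) (hc : Continuous f) (hi : Integrable f)
    (hone : ∫ x, f x = 1) (hμ : 0 < μ) (x : ℝ) : ecmConv f μ x ≤ 1 / μ := by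
  rw [ecm_repr hc hi hμ x]
  have h1 := ecm_F_le h0 hc hi hone hμ x
  have h2 : (0:ℝ) < Real.exp (-x / μ) / μ := by positivity
  calc Real.exp (-x / μ) / μ * ecmF f μ x
      ≤ Real.exp (-x / μ) / μ * Real.exp (x / μ) := by
        exact mul_le_mul_of_nonneg_left h1 h2.le
    _ = Real.exp (-x / μ) * Real.exp (x / μ) / μ := by ring
    _ = 1 / μ := by rw [← Real.exp_add, neg_div, neg_add_cancel, Real.exp_zero]

end ecmAux

/-- With f a continuously differentiable probability density with bounded derivative,
positive for sufficiently small x and unimodal, and f_λ the density of X + λY with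
Y ~ Exp(1) independent of X ~ f: if 0 < λ₀ < λ, then every mode (global maximizer)
of f_λ is strictly larger than every mode of f_{λ₀}. -/
theorem exp_convolution_mode_strict_mono
    (f : ℝ → ℝ)
    (hdens_nonneg : ∀ x, 0 ≤ f x)
    (hdens_int : ∫ x, f x = 1)
    (hC1 : ContDiff ℝ 1 f)
    (hbdd : ∃ C, ∀ x, |deriv f x| ≤ C)
    (hpos : ∃ x₁, ∀ x < x₁, 0 < f x)
    (a : ℝ)
    (hmode : (∀ x < a, 0 ≤ deriv f x) ∧ (∀ x > a, deriv f x ≤ 0))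
    (lam₀ lam : ℝ) (hlam₀ : 0 < lam₀) (hlam : lam₀ < lam)
    (flam₀ flam : ℝ → ℝ)
    (hflam₀ : ∀ x, flam₀ x
      = ∫ z in Set.Ioi (0:ℝ), f (x - z) * ((1 / lam₀) * Real.exp (-z / lam₀)))
    (hflam : ∀ x, flam x
      = ∫ z in Set.Ioi (0:ℝ), f (x - z) * ((1 / lam) * Real.exp (-z / lam)))
    (x₀ x₁ : ℝ)
    (hx₀ : ∀ x, flam₀ x ≤ flam₀ x₀)
    (hx₁ : ∀ x, flam x ≤ flam x₁) :
    x₀ < x₁ := by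
  have hcont : Continuous f := hC1.continuous
  have hi : Integrable f := by
    by_contra h
    rw [MeasureTheory.integral_undef h] at hdens_int
    exact one_ne_zero hdens_int.symm
  have hdiff : Differentiable ℝ f := hC1.differentiable one_ne_zero
  have hlam' : 0 < lam := lt_trans hlam₀ hlam
  have hmon : MonotoneOn f (Set.Iic a) := by
    refine monotoneOn_of_deriv_nonneg (convex_Iic a) hcont.continuousOn
      (fun x hx => (hdiff x).differentiableWithinAt) fun x hx => ?_
    rw [interior_Iic] at hx; exact hmode.1 x hx
  have hanti : AntitoneOn f (Set.Ici a) := by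
    refine antitoneOn_of_deriv_nonpos (convex_Ici a) hcont.continuousOn
      (fun x hx => (hdiff x).differentiableWithinAt) fun x hx => ?_
    rw [interior_Ici] at hx; exact hmode.2 x hx
  have hmax₀ : ∀ x, ecmConv f lam₀ x ≤ ecmConv f lam₀ x₀ := by
    intro x; have h := hx₀ x; rwa [hflam₀ x, hflam₀ x₀] at h
  have hmax₁ : ∀ x, ecmConv f lam x ≤ ecmConv f lam x₁ := by
    intro x; have h := hx₁ x; rwa [hflam x, hflam x₁] at h
  by_contra hcontra
  push_neg at hcontra
  -- notation
  set A := ecmConv f lam with hA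
  set B := ecmConv f lam₀ with hB
  set Φ : ℝ → ℝ := fun x => Real.exp (x / lam) * (A x - B x) with hΦ
  have hbelow₀ := ecm_below_mode hcont hi hdens_nonneg hmon hanti hlam₀ hmax₀
  have hll : 1 / lam - 1 / lam₀ < 0 := by
    have := one_div_lt_one_div_of_lt hlam₀ hlam; linarith
  have hΦd : ∀ x, HasDerivAt Φ
      (Real.exp (x / lam) * (f x - B x) * (1 / lam - 1 / lam₀)) x := by
    intro x
    have he : HasDerivAt (fun t : ℝ => Real.exp (t / lam))
        (Real.exp (x / lam) * (1 / lam)) x := by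
      simpa using ((hasDerivAt_id x).div_const lam).exp
    have h2 := he.mul ((ecm_hasDerivAt hcont hi hlam' x).sub
      (ecm_hasDerivAt hcont hi hlam₀ x))
    refine h2.congr_deriv ?_
    field_simp
    rw [Pi.sub_apply, hB]
    ring
  have hΦcont : Continuous Φ :=
    continuous_iff_continuousAt.2 fun x => (hΦd x).differentiableAt.continuousAt
  have hΦanti : AntitoneOn Φ (Set.Iic x₀) := by
    refine antitoneOn_of_deriv_nonpos (convex_Iic x₀) hΦcont.continuousOn
      (fun x hx => (hΦd x).differentiableAt.differentiableWithinAt) fun x hx => ?_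
    rw [interior_Iic] at hx
    rw [(hΦd x).deriv]
    have h1 : 0 ≤ f x - B x := sub_nonneg.2 (hbelow₀ x (le_of_lt hx))
    have h3 : 0 < Real.exp (x / lam) := Real.exp_pos _
    exact mul_nonpos_of_nonneg_of_nonpos (mul_nonneg h3.le h1) hll.le
  have hΦ0 : Tendsto Φ atBot (nhds 0) := by
    have hb : ∀ x, ‖Φ x‖ ≤ Real.exp (x / lam) * (1 / lam + 1 / lam₀) := by
      intro x
      have hA1 : 0 ≤ A x := ecm_nonneg hdens_nonneg hlam' x
      have hA2 : A x ≤ 1 / lam := ecm_le hdens_nonneg hcont hi hdens_int hlam' x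
      have hB1 : 0 ≤ B x := ecm_nonneg hdens_nonneg hlam₀ x
      have hB2 : B x ≤ 1 / lam₀ := ecm_le hdens_nonneg hcont hi hdens_int hlam₀ x
      have habs : |A x - B x| ≤ 1 / lam + 1 / lam₀ :=
        abs_le.2 ⟨by linarith, by linarith⟩
      calc ‖Φ x‖ = Real.exp (x / lam) * |A x - B x| := by
            rw [hΦ]
            rw [Real.norm_eq_abs, abs_mul, abs_of_pos (Real.exp_pos _)]
        _ ≤ Real.exp (x / lam) * (1 / lam + 1 / lam₀) := by
            exact mul_le_mul_of_nonneg_left habs (Real.exp_pos _).le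
    refine squeeze_zero_norm hb ?_
    have h1 : Tendsto (fun x : ℝ => x / lam) atBot atBot :=
      tendsto_id.atBot_div_const hlam'
    have h2 := (Real.tendsto_exp_atBot.comp h1).mul_const (1 / lam + 1 / lam₀)
    simpa using h2
  have hΦle : ∀ x ≤ x₀, Φ x ≤ 0 := by
    intro x hx
    refine ge_of_tendsto hΦ0 ?_
    filter_upwards [eventually_le_atBot x] with y hy
    exact hΦanti (Set.mem_Iic.2 (le_trans hy hx)) (Set.mem_Iic.2 hx) hy
  -- mode equation at x₁
  have hmeq₁ : f x₁ = A x₁ := ecm_modeEq hcont hi hlam' hmax₁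
  have hBle : B x₁ ≤ f x₁ := hbelow₀ x₁ hcontra
  have hΦx₁ : Φ x₁ = 0 := by
    refine le_antisymm (hΦle x₁ hcontra) ?_
    have h1 : 0 ≤ A x₁ - B x₁ := by rw [← hmeq₁]; linarith
    have h3 : 0 < Real.exp (x₁ / lam) := Real.exp_pos _
    rw [hΦ]
    positivity
  have hΦzero : ∀ y ≤ x₁, Φ y = 0 := by
    intro y hy
    refine le_antisymm (hΦle y (le_trans hy hcontra)) ?_
    rw [← hΦx₁]
    exact hΦanti (Set.mem_Iic.2 (le_trans hy hcontra)) (Set.mem_Iic.2 hcontra) hy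
  have hfB : ∀ y < x₁, f y = B y := by
    intro y hy
    have hev : Φ =ᶠ[nhds y] fun _ => (0:ℝ) := by
      filter_upwards [Iio_mem_nhds hy] with t ht
      exact hΦzero t (le_of_lt ht)
    have hder0 : deriv Φ y = 0 := by rw [hev.deriv_eq]; simp
    rw [(hΦd y).deriv] at hder0
    have h3 : Real.exp (y / lam) ≠ 0 := (Real.exp_pos _).ne'
    have h2 : 1 / lam - 1 / lam₀ ≠ 0 := ne_of_lt hll
    rcases mul_eq_zero.1 hder0 with h | h
    · rcases mul_eq_zero.1 h with h' | h'
      · exact absurd h' h3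
      · linarith [sub_eq_zero.1 h']
    · exact absurd h h2
  have hBder0 : ∀ y ∈ Set.Iio x₁, deriv B y = 0 := by
    intro y hy
    rw [(ecm_hasDerivAt hcont hi hlam₀ y).deriv, ← hB, hfB y hy]
    simp
  have hBdiff : ∀ y, DifferentiableAt ℝ B y :=
    fun y => (ecm_hasDerivAt hcont hi hlam₀ y).differentiableAt
  have hBcont : Continuous B :=
    continuous_iff_continuousAt.2 fun y => (hBdiff y).continuousAt
  have hBconst : ∀ y ≤ x₁, B y = B x₁ := by
    have hm1 : MonotoneOn B (Set.Iic x₁) := by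
      refine monotoneOn_of_deriv_nonneg (convex_Iic x₁) hBcont.continuousOn
        (fun y hy => (hBdiff y).differentiableWithinAt) fun y hy => ?_
      rw [interior_Iic] at hy; rw [hBder0 y hy]
    have hm2 : AntitoneOn B (Set.Iic x₁) := by
      refine antitoneOn_of_deriv_nonpos (convex_Iic x₁) hBcont.continuousOn
        (fun y hy => (hBdiff y).differentiableWithinAt) fun y hy => ?_
      rw [interior_Iic] at hy; rw [hBder0 y hy]
    intro y hy
    exact le_antisymm (hm1 (Set.mem_Iic.2 hy) (Set.mem_Iic.2 le_rfl) hy)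
      (hm2 (Set.mem_Iic.2 hy) (Set.mem_Iic.2 le_rfl) hy)
  obtain ⟨c, hp⟩ := hpos
  have hM₁pos : 0 < A x₁ := ecm_pos hcont hi hdens_nonneg hlam' hp x₁
  have hBA : B x₁ = A x₁ := by
    have h3 : Real.exp (x₁ / lam) ≠ 0 := (Real.exp_pos _).ne'
    have := hΦx₁
    rw [hΦ] at this
    rcases mul_eq_zero.1 this with h | h
    · exact absurd h h3
    · linarith [sub_eq_zero.1 h]
  have hfconst : ∀ y < x₁, f y = A x₁ := fun y hy => by
    rw [hfB y hy, hBconst y hy.le, hBA]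
  have hIio : IntegrableOn f (Set.Iio x₁) := hi.integrableOn
  have hconstInt : IntegrableOn (fun _ => A x₁ : ℝ → ℝ) (Set.Iio x₁) := by
    refine hIio.congr_fun (fun y hy => (hfconst y hy)) measurableSet_Iio
  rw [integrableOn_const_iff] at hconstInt
  rcases hconstInt with h | h
  · exact absurd (enorm_eq_zero.1 h) (ne_of_gt hM₁pos)
  · rw [Real.volume_Iio] at h
    exact absurd h (by simp)
end

section
/- Let t₀ ≈ 1.2564 be the unique positive root of e^t = 1 + 2t. Define f(r) = P(G_r > r β) for r a positive integer, where G_r ~ Gamma(r,1) and β > 0. Then f(r) - f(r+1) = [(rβ)^r e^{-rβ}/Γ(r+1)] · [∫₀¹ (1 + y/r)^r e^{-yβ} β dy − 1]; moreover the bracketed quantity ∫₀¹ (1+y/r)^r e^{-yβ} β dy is strictly increasing in r, and if β > t₀ then f(1) > f(2). -/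
open MeasureTheory Set


lemma integOn (n : ℕ) {a : ℝ} (ha : 0 ≤ a) :
    IntegrableOn (fun x : ℝ => x ^ n * Real.exp (-x)) (Ioi a) := by
  have h := Real.GammaIntegral_convergent (s := (n + 1 : ℝ)) (by positivity)
  have h2 : IntegrableOn (fun x : ℝ => x ^ n * Real.exp (-x)) (Ioi 0) := by
    refine h.congr_fun ?_ measurableSet_Ioi
    intro x hx
    simp [add_sub_cancel_right, Real.rpow_natCast, mul_comm]
  exact h2.mono_set (Ioi_subset_Ioi ha)

lemma ibp_tail (n : ℕ) {a : ℝ} (ha : 0 ≤ a) :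
    ∫ x in Ioi a, x ^ (n + 1) * Real.exp (-x)
      = a ^ (n + 1) * Real.exp (-a) + (n + 1) * ∫ x in Ioi a, x ^ n * Real.exp (-x) := by
  have hd : ∀ x ∈ Ici a, HasDerivAt (fun x : ℝ => -(x ^ (n + 1) * Real.exp (-x)))
      (x ^ (n + 1) * Real.exp (-x) - (n + 1) * (x ^ n * Real.exp (-x))) x := by
    intro x _
    have h1 : HasDerivAt (fun x : ℝ => x ^ (n + 1)) ((n + 1) * x ^ n) x := by
      simpa using hasDerivAt_pow (n + 1) x
    have h2 : HasDerivAt (fun x : ℝ => Real.exp (-x)) (-Real.exp (-x)) x := by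
      simpa [Function.comp_def] using (Real.hasDerivAt_exp (-x)).comp x (hasDerivAt_neg x)
    have := (h1.mul h2).neg
    refine this.congr_deriv ?_; ring
  have hint : IntegrableOn (fun x : ℝ => x ^ (n + 1) * Real.exp (-x)
      - (n + 1) * (x ^ n * Real.exp (-x))) (Ioi a) :=
    (integOn (n + 1) ha).sub ((integOn n ha).const_mul _)
  have htend : Filter.Tendsto (fun x : ℝ => -(x ^ (n + 1) * Real.exp (-x)))
      Filter.atTop (nhds 0) := by
    simpa using (Real.tendsto_pow_mul_exp_neg_atTop_nhds_zero (n + 1)).neg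
  have key := integral_Ioi_of_hasDerivAt_of_tendsto' hd hint htend
  rw [integral_sub (integOn (n + 1) ha) ((integOn n ha).const_mul _),
    integral_const_mul] at key
  have := key
  linarith [this]

lemma split_tail (n : ℕ) {a b : ℝ} (h0 : 0 ≤ a) (hab : a ≤ b) :
    ∫ x in Ioi a, x ^ n * Real.exp (-x)
      = (∫ x in a..b, x ^ n * Real.exp (-x)) + ∫ x in Ioi b, x ^ n * Real.exp (-x) := by
  rw [intervalIntegral.integral_of_le hab]
  rw [← setIntegral_union (Ioc_disjoint_Ioi le_rfl) measurableSet_Ioi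
    ((integOn n h0).mono_set Ioc_subset_Ioi_self) (integOn n (h0.trans hab)),
    Ioc_union_Ioi_eq_Ioi hab]

lemma subst_int (n : ℕ) {β : ℝ} (hβ : 0 < β) :
    ∫ x in ((n:ℝ)+1)*β..((n:ℝ)+2)*β, x ^ (n+1) * Real.exp (-x)
      = (((n:ℝ)+1)*β) ^ (n+1) * Real.exp (-(((n:ℝ)+1)*β)) *
          ∫ y in (0:ℝ)..1, (1 + y / ((n:ℝ)+1)) ^ (n+1) * Real.exp (-y * β) * β := by
  have key := intervalIntegral.integral_comp_smul_deriv (a := (0:ℝ)) (b := 1)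
    (f := fun y => (y + ((n:ℝ)+1)) * β) (f' := fun _ => β)
    (g := fun x => x ^ (n+1) * Real.exp (-x))
    (fun x _ => by simpa using ((hasDerivAt_id x).add_const ((n:ℝ)+1)).mul_const β)
    continuousOn_const (by continuity)
  simp only [zero_add, Function.comp] at key
  have h2 : ((1:ℝ) + ((n:ℝ)+1)) * β = ((n:ℝ)+2)*β := by ring
  rw [h2] at key
  rw [← key, ← intervalIntegral.integral_const_mul]
  apply intervalIntegral.integral_congr
  intro y _
  have hn : ((n:ℝ)+1) ≠ 0 := by positivity
  have e1 : (y + ((n:ℝ)+1)) * β = (((n:ℝ)+1)*β) * (1 + y / ((n:ℝ)+1)) := by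
    field_simp; ring
  have e2 : Real.exp (-((y + ((n:ℝ)+1)) * β))
      = Real.exp (-(((n:ℝ)+1)*β)) * Real.exp (-y * β) := by
    rw [← Real.exp_add]; congr 1; ring
  simp only []
  rw [smul_eq_mul, e2, e1, mul_pow]
  ring

lemma part1_core {β : ℝ} (hβ : 0 < β) (n : ℕ) :
    (∫ x in Ioi (((n:ℝ)+1)*β), x ^ n * Real.exp (-x)) / Real.Gamma ((n:ℝ)+1)
      - (∫ x in Ioi (((n:ℝ)+2)*β), x ^ (n+1) * Real.exp (-x)) / Real.Gamma ((n:ℝ)+2)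
    = (((n:ℝ)+1)*β) ^ (n+1) * Real.exp (-(((n:ℝ)+1)*β)) / Real.Gamma ((n:ℝ)+2)
        * ((∫ y in (0:ℝ)..1, (1 + y / ((n:ℝ)+1)) ^ (n+1) * Real.exp (-y * β) * β) - 1) := by
  have hn1 : (0:ℝ) < (n:ℝ)+1 := by positivity
  have ha : (0:ℝ) ≤ ((n:ℝ)+1)*β := by positivity
  have hab : ((n:ℝ)+1)*β ≤ ((n:ℝ)+2)*β := by nlinarith
  have hA := ibp_tail n ha
  have hS := split_tail (n+1) ha hab
  have hsub := subst_int n hβ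
  have hG : Real.Gamma ((n:ℝ)+2) = ((n:ℝ)+1) * Real.Gamma ((n:ℝ)+1) := by
    rw [show ((n:ℝ)+2) = ((n:ℝ)+1)+1 by ring, Real.Gamma_add_one (by positivity)]
  have hGpos : 0 < Real.Gamma ((n:ℝ)+1) := Real.Gamma_pos_of_pos hn1
  rw [hsub] at hS
  set B := ∫ x in Ioi (((n:ℝ)+1)*β), x ^ n * Real.exp (-x) with hB
  set C := ∫ x in Ioi (((n:ℝ)+2)*β), x ^ (n+1) * Real.exp (-x) with hC
  set J := ∫ y in (0:ℝ)..1, (1 + y / ((n:ℝ)+1)) ^ (n+1) * Real.exp (-y * β) * β with hJ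
  set P := (((n:ℝ)+1)*β) ^ (n+1) * Real.exp (-(((n:ℝ)+1)*β)) with hP
  have key : ((n:ℝ)+1) * B - C = P * (J - 1) := by linear_combination hS - hA
  rw [hG]
  have hne : ((n:ℝ)+1) ≠ 0 := by positivity
  rw [← mul_div_mul_left B (Real.Gamma ((n:ℝ)+1)) hne, div_sub_div_same, key,
    div_mul_eq_mul_div]

lemma pow_mono_in_n {y : ℝ} (hy : 0 < y) {r₁ r₂ : ℕ} (h1 : 0 < r₁) (h12 : r₁ < r₂) :
    (1 + y / r₁) ^ r₁ < (1 + y / r₂) ^ r₂ := by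
  have hr1 : (0:ℝ) < r₁ := by exact_mod_cast h1
  have hr2 : (0:ℝ) < r₂ := by exact_mod_cast h1.trans h12
  have hs : (0:ℝ) < y / r₂ := by positivity
  have hp : 1 < (r₂:ℝ) / r₁ := (one_lt_div hr1).2 (by exact_mod_cast h12)
  have hb := one_add_mul_self_lt_rpow_one_add (by linarith : (-1:ℝ) ≤ y / r₂)
    (ne_of_gt hs) hp
  have e : 1 + (r₂:ℝ) / r₁ * (y / r₂) = 1 + y / r₁ := by field_simp
  rw [e] at hb
  have hpos : (0:ℝ) ≤ 1 + y / r₁ := by positivity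
  have h3 := pow_lt_pow_left₀ hb hpos h1.ne'
  calc (1 + y / r₁) ^ r₁ < ((1 + y / r₂) ^ ((r₂:ℝ) / r₁)) ^ r₁ := h3
    _ = (1 + y / r₂) ^ r₂ := by
        rw [← Real.rpow_natCast ((1 + y / r₂) ^ ((r₂:ℝ) / r₁)) r₁,
          ← Real.rpow_mul (by positivity), div_mul_cancel₀ _ (ne_of_gt hr1),
          Real.rpow_natCast]

lemma J1_val {β : ℝ} (hβ : 0 < β) :
    ∫ y in (0:ℝ)..1, (1 + y) * Real.exp (-y * β) * β
      = 1 + 1/β - 2 * Real.exp (-β) - Real.exp (-β) / β := by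
  have hd : ∀ y ∈ Set.uIcc (0:ℝ) 1,
      HasDerivAt (fun y : ℝ => -((1 + y) * Real.exp (-y * β)) - Real.exp (-y * β) / β)
        ((1 + y) * Real.exp (-y * β) * β) y := by
    intro y _
    have hexp : HasDerivAt (fun y : ℝ => Real.exp (-y * β)) (-β * Real.exp (-y * β)) y := by
      have h0 : HasDerivAt (fun y : ℝ => -y * β) (-β) y := by
        simpa using ((hasDerivAt_id y).neg.mul_const β)
      simpa [mul_comm, Function.comp_def] using (Real.hasDerivAt_exp (-y * β)).comp y h0
    have h1 : HasDerivAt (fun y : ℝ => (1 + y) * Real.exp (-y * β))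
        (1 * Real.exp (-y * β) + (1 + y) * (-β * Real.exp (-y * β))) y :=
      (((hasDerivAt_id y).const_add 1).mul hexp)
    have := h1.neg.sub (hexp.div_const β)
    refine this.congr_deriv ?_
    field_simp
    ring
  have := intervalIntegral.integral_eq_sub_of_hasDerivAt hd
    (Continuous.intervalIntegrable (by continuity) 0 1)
  rw [this]
  field_simp
  simp only [mul_zero, neg_zero, Real.exp_zero]; ring

lemma exp_gt {t₀ β : ℝ} (ht₀_pos : 0 < t₀) (ht₀ : Real.exp t₀ = 1 + 2 * t₀)
    (hβ : t₀ < β) : 1 + 2 * β < Real.exp β := by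
  have hβpos : 0 < β := ht₀_pos.trans hβ
  have ha : 0 < 1 - t₀ / β := by
    have : t₀ / β < 1 := (div_lt_one hβpos).2 hβ
    linarith
  have hb : 0 < t₀ / β := by positivity
  have hconv := strictConvexOn_exp.2 (Set.mem_univ (0:ℝ)) (Set.mem_univ β)
    (ne_of_lt hβpos) ha hb (by ring)
  rw [smul_eq_mul, smul_eq_mul, smul_eq_mul, smul_eq_mul, mul_zero, zero_add,
    div_mul_cancel₀ _ (ne_of_gt hβpos), Real.exp_zero, ht₀] at hconv
  have h3 := mul_lt_mul_of_pos_right hconv hβpos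
  have e1 : ((1 - t₀ / β) * 1 + t₀ / β * Real.exp β) * β
      = (β - t₀) + t₀ * Real.exp β := by field_simp
  rw [e1] at h3
  nlinarith [h3, ht₀_pos]


set_option maxHeartbeats 1000000 in
/-- Let t₀ > 0 be the root of e^t = 1 + 2t, β > 0, and f(r) = P(G_r > rβ) with
G_r ~ Gamma(r,1).  Then
f(r) - f(r+1) = [(rβ)^r e^{-rβ}/Γ(r+1)] [∫₀¹ (1+y/r)^r e^{-yβ} β dy − 1];
the integral ∫₀¹ (1+y/r)^r e^{-yβ} β dy is strictly increasing in r;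
and if β > t₀ then f(1) > f(2). -/
theorem gamma_tail_difference
    (t₀ : ℝ) (ht₀_pos : 0 < t₀) (ht₀ : Real.exp t₀ = 1 + 2 * t₀)
    (β : ℝ) (hβ : 0 < β)
    (f : ℕ → ℝ)
    (hf : ∀ r, f r = ∫ x in Set.Ioi ((r : ℝ) * β),
      x ^ (r - 1) * Real.exp (-x) / Real.Gamma r) :
    (∀ r : ℕ, 0 < r →
        f r - f (r + 1)
          = ((r : ℝ) * β) ^ r * Real.exp (-((r : ℝ) * β)) / Real.Gamma (r + 1)
              * ((∫ y in (0:ℝ)..1, (1 + y / r) ^ r * Real.exp (-y * β) * β) - 1))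
      ∧ (∀ r₁ r₂ : ℕ, 0 < r₁ → r₁ < r₂ →
          (∫ y in (0:ℝ)..1, (1 + y / r₁) ^ r₁ * Real.exp (-y * β) * β)
            < ∫ y in (0:ℝ)..1, (1 + y / r₂) ^ r₂ * Real.exp (-y * β) * β)
      ∧ (β > t₀ → f 1 > f 2) := by
  have hf1 : ∀ n : ℕ, f (n + 1)
      = (∫ x in Ioi (((n:ℝ)+1)*β), x ^ n * Real.exp (-x)) / Real.Gamma ((n:ℝ)+1) := by
    intro n
    rw [hf (n + 1), ← integral_div]
    push_cast
    simp
  have hf2 : ∀ n : ℕ, f (n + 2)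
      = (∫ x in Ioi (((n:ℝ)+2)*β), x ^ (n+1) * Real.exp (-x)) / Real.Gamma ((n:ℝ)+2) := by
    intro n
    rw [hf (n + 2), ← integral_div]
    push_cast
    simp
  have hpart1 : ∀ r : ℕ, 0 < r →
      f r - f (r + 1)
        = ((r : ℝ) * β) ^ r * Real.exp (-((r : ℝ) * β)) / Real.Gamma (r + 1)
            * ((∫ y in (0:ℝ)..1, (1 + y / r) ^ r * Real.exp (-y * β) * β) - 1) := by
    intro r hr
    obtain ⟨n, rfl⟩ : ∃ n, r = n + 1 := ⟨r - 1, (Nat.succ_pred_eq_of_pos hr).symm⟩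
    have h := part1_core hβ n
    rw [← hf1 n, ← hf2 n] at h
    rw [show n + 1 + 1 = n + 2 from rfl, h]
    push_cast
    rw [show ((n:ℝ)+1)+1 = (n:ℝ)+2 by ring]
  refine ⟨hpart1, ?_, ?_⟩
  · intro r₁ r₂ h1 h12
    refine intervalIntegral.integral_lt_integral_of_continuousOn_of_le_of_exists_lt
      one_pos (Continuous.continuousOn (by continuity))
      (Continuous.continuousOn (by continuity)) ?_ ⟨1, by norm_num, ?_⟩
    · intro x hx
      exact mul_le_mul_of_nonneg_right
        (mul_le_mul_of_nonneg_right (pow_mono_in_n hx.1 h1 h12).le (Real.exp_nonneg _)) hβ.le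
    · exact mul_lt_mul_of_pos_right
        (mul_lt_mul_of_pos_right (pow_mono_in_n one_pos h1 h12) (Real.exp_pos _)) hβ
  · intro hβt
    have h1 := hpart1 1 one_pos
    norm_num [Real.Gamma_two] at h1
    have hv2 : (∫ x in (0:ℝ)..1, (1+x)*Real.exp (-(x*β))) * β
        = ∫ y in (0:ℝ)..1, (1+y)*Real.exp (-y*β)*β := by
      rw [← intervalIntegral.integral_mul_const]
      apply intervalIntegral.integral_congr
      intro y _
      simp only [neg_mul]
    rw [hv2, J1_val hβ] at h1
    have hgt := exp_gt ht₀_pos ht₀ hβt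
    have hprod : Real.exp (-β) * Real.exp β = 1 := by
      rw [← Real.exp_add]; simp
    have h4 : 0 < 1 - Real.exp (-β) - 2*β*Real.exp (-β) := by
      nlinarith [mul_pos (sub_pos.2 hgt) (Real.exp_pos (-β)), hprod]
    have h5 : 0 < (1 - Real.exp (-β) - 2*β*Real.exp (-β))/β := div_pos h4 hβ
    have h6 : 1 + 1/β - 2 * Real.exp (-β) - Real.exp (-β) / β - 1
        = (1 - Real.exp (-β) - 2*β*Real.exp (-β))/β := by
      field_simp
      ring
    have h7 : 0 < Real.exp (-β) * β := mul_pos (Real.exp_pos _) hβ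
    have h8 : 0 < 1 + 1/β - 2 * Real.exp (-β) - Real.exp (-β) / β - 1 := by
      rw [h6]; exact h5
    nlinarith [h1, mul_pos h7 h8]
end
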